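/- arXiv:2108.13578 — 6 statements merged into one kernel-verified Lean document; each statement's English description precedes it below -/
import Mathlib

section
/- Let A ∈ {0,1,−1}^{m×n} be such that the bipartite graph G_A is t-left-regular and a (γ,μ)-unique expander, and let s_max be the maximum degree of a right vertex of G_A. Then for any p ≥ 1, any δ₁ > 0, and any γn-sparse x ∈ ℝ^n, ‖Ax‖_p^p ≥ ( t(1−μ)/(1+δ₁)^{p−1} − (μ t / δ₁^{p−1})·(s_max − 1)^{p−1} ) · ‖x‖_p^p. -/
open Finset

noncomputable def lpNorm {ι : Type*} [Fintype ι] (p : ℝ) (x : ι → ℝ) : ℝ :=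
  (∑ i, |x i| ^ p) ^ (1 / p)

/-- `x` has at most `k` nonzero coordinates. -/
def Sparse {ι : Type*} (k : ℝ) (x : ι → ℝ) : Prop :=
  ((Function.support x).ncard : ℝ) ≤ k

/-- `x` is `(k, ε)`-`ℓ_p`-compressible. -/
def Compressible {ι : Type*} [Fintype ι] (p k ε : ℝ) (x : ι → ℝ) : Prop :=
  ∃ y : ι → ℝ, Sparse k y ∧ lpNorm p (x - y) ≤ ε * lpNorm p x

/-- A subspace is `(k, ε)`-`ℓ_p`-spread if every nonzero vector in it is not
`(k, ε)`-`ℓ_p`-compressible. -/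
def SpreadSubspace {ι : Type*} [Fintype ι] (p k ε : ℝ) (X : Submodule ℝ (ι → ℝ)) : Prop :=
  ∀ x ∈ X, x ≠ 0 → ¬ Compressible p k ε x

/-- The `(ℓ_q, ℓ_p)`-distortion of a vector. -/
noncomputable def distortion {ι : Type*} [Fintype ι] (q p : ℝ) (x : ι → ℝ) : ℝ :=
  (Fintype.card ι : ℝ) ^ (1 / q - 1 / p) * lpNorm p x / lpNorm q x

/-- The `(ℓ_q, ℓ_p)`-distortion of a subspace. -/
noncomputable def distortionSub {ι : Type*} [Fintype ι] (q p : ℝ)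
    (X : Submodule ℝ (ι → ℝ)) : ℝ :=
  sSup {d | ∃ x ∈ X, x ≠ 0 ∧ d = distortion q p x}

/-- A bipartite graph, presented as the neighbor sets of the left vertices,
is `t`-left-regular. -/
def LeftRegular {n m : ℕ} (N : Fin n → Finset (Fin m)) (t : ℕ) : Prop :=
  ∀ u, (N u).card = t

/-- The neighborhood `N(S)` of a set `S` of left vertices. -/
def nbrs {n m : ℕ} (N : Fin n → Finset (Fin m)) (S : Finset (Fin n)) : Finset (Fin m) :=
  S.biUnion N

/-- The set `U(S)` of unique neighbors of a set `S` of left vertices. -/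
def uniqueNbrs {n m : ℕ} (N : Fin n → Finset (Fin m)) (S : Finset (Fin n)) : Finset (Fin m) :=
  (nbrs N S).filter (fun r => (S.filter (fun v => r ∈ N v)).card = 1)

/-- The degree of a right vertex. -/
def rightDeg {n m : ℕ} (N : Fin n → Finset (Fin m)) (r : Fin m) : ℕ :=
  (Finset.univ.filter (fun u => r ∈ N u)).card

/-- `(γ, μ)`-vertex expansion. -/
def VertexExpander {n m : ℕ} (N : Fin n → Finset (Fin m)) (t : ℕ) (γ μ : ℝ) : Prop :=
  ∀ S : Finset (Fin n), (S.card : ℝ) ≤ γ * n →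
    (t : ℝ) * (1 - μ) * S.card ≤ ((nbrs N S).card : ℝ)

/-- `(γ, μ)`-unique expansion. -/
def UniqueExpander {n m : ℕ} (N : Fin n → Finset (Fin m)) (t : ℕ) (γ μ : ℝ) : Prop :=
  ∀ S : Finset (Fin n), (S.card : ℝ) ≤ γ * n →
    (t : ℝ) * (1 - μ) * S.card ≤ ((uniqueNbrs N S).card : ℝ)

/-- The bipartite graph `G_A` of a matrix, presented by neighbor sets of left vertices
(columns): the neighbors of `u ∈ V_L` are the rows `r` with `A r u ≠ 0`. -/
noncomputable def matNbrs {m n : ℕ} (A : Matrix (Fin m) (Fin n) ℝ) : Fin n → Finset (Fin m) :=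
  fun u => Finset.univ.filter (fun r => A r u ≠ 0)

/-- `A ∈ M_{m,n,s,t}`: entries in `{0, 1, -1}`, every row has exactly `s` nonzero entries,
and every column has exactly `t` nonzero entries. -/
def Biregular {m n : ℕ} (s t : ℕ) (A : Matrix (Fin m) (Fin n) ℝ) : Prop :=
  (∀ r u, A r u = 0 ∨ A r u = 1 ∨ A r u = -1) ∧
  (∀ r : Fin m, (Finset.univ.filter (fun u => A r u ≠ 0)).card = s) ∧
  (∀ u : Fin n, (Finset.univ.filter (fun r => A r u ≠ 0)).card = t)

/-- The bipartite graph on `V_L ⊕ V_R` associated with left-neighbor data `N`. -/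
def bipGraph {n m : ℕ} (N : Fin n → Finset (Fin m)) : SimpleGraph (Fin n ⊕ Fin m) where
  Adj x y :=
    match x, y with
    | Sum.inl u, Sum.inr r => r ∈ N u
    | Sum.inr r, Sum.inl u => r ∈ N u
    | _, _ => False
  symm := ⟨by rintro (u | r) (u' | r') h <;> first | exact h.elim | exact h⟩
  loopless := ⟨by rintro (u | r) h <;> exact h.elim⟩

/-- The ball of radius `ℓ` about `v` in a graph. -/
def graphBall {V : Type*} (G : SimpleGraph V) (v : V) (ℓ : ℕ) : Set V :=
  {w | G.Reachable v w ∧ G.dist v w ≤ ℓ}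

/-- The ball of radius `ℓ` about `v` contains no cycle. -/
def BallAcyclic {V : Type*} (G : SimpleGraph V) (v : V) (ℓ : ℕ) : Prop :=
  (SimpleGraph.induce (graphBall G v ℓ) G).IsAcyclic

/-- `𝒢_{m,n,s,t}`: the set of bipartite graphs on `V_L = Fin n`, `V_R = Fin m`
(presented by neighbor sets of left vertices) in which every left vertex has degree
exactly `t` and every right vertex has degree exactly `s`. -/
def GSet (m n s t : ℕ) : Finset (Fin n → Finset (Fin m)) :=
  Finset.univ.filter (fun N => (∀ u, (N u).card = t) ∧ (∀ r, rightDeg N r = s))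

/-- The edge set `F` is contained in the edge set of the graph given by `N`. -/
def edgesSubset {n m : ℕ} (F : Finset (Fin n × Fin m)) (N : Fin n → Finset (Fin m)) : Prop :=
  ∀ e ∈ F, e.2 ∈ N e.1

/-- The `ℓ₂ → ℓ₂` operator norm of a matrix. -/
noncomputable def l2OpNorm {m n : ℕ} (A : Matrix (Fin m) (Fin n) ℝ) : ℝ :=
  sSup {c | ∃ x : Fin n → ℝ, x ≠ 0 ∧ c = lpNorm 2 (A.mulVec x) / lpNorm 2 x}


lemma aux_pm {ι : Type*} (p : ℝ) (hp : 1 ≤ p) (s : Finset ι) (f : ι → ℝ)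
    (hf : ∀ i ∈ s, 0 ≤ f i) :
    (∑ i ∈ s, f i) ^ p ≤ (s.card : ℝ) ^ (p - 1) * ∑ i ∈ s, f i ^ p := by
  rcases s.eq_empty_or_nonempty with rfl | hs
  · simp [Real.zero_rpow (by positivity : p ≠ 0)]
  · have hc : (0:ℝ) < s.card := by exact_mod_cast hs.card_pos
    have h := Real.rpow_arith_mean_le_arith_mean_rpow s (fun _ => (s.card:ℝ)⁻¹)
      (fun i => (s.card:ℝ) * f i) (fun i _ => by positivity)
      (by simp [Finset.sum_const, mul_comm]; field_simp)
      (fun i hi => by have := hf i hi; positivity) hp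
    have e1 : ∑ i ∈ s, (s.card:ℝ)⁻¹ * ((s.card:ℝ) * f i) = ∑ i ∈ s, f i := by
      refine Finset.sum_congr rfl fun i hi => ?_
      field_simp
    rw [e1] at h
    refine h.trans_eq ?_
    rw [Finset.mul_sum]
    refine Finset.sum_congr rfl fun i hi => ?_
    rw [Real.mul_rpow (le_of_lt hc) (hf i hi), Real.rpow_sub hc, Real.rpow_one]
    field_simp


lemma aux_convex (p δ u v : ℝ) (hp : 1 ≤ p) (hδ : 0 < δ) (hu : 0 ≤ u) (hv : 0 ≤ v) :
    (u + v) ^ p ≤ (1 + δ) ^ (p - 1) * u ^ p + (1 + 1/δ) ^ (p - 1) * v ^ p := by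
  have h1δ : (0:ℝ) < 1 + δ := by linarith
  have h1δ' : (0:ℝ) < 1 + 1/δ := by positivity
  have hcx := (convexOn_rpow hp).2 (Set.mem_Ici.mpr (by positivity : (0:ℝ) ≤ (1+δ)*u))
    (Set.mem_Ici.mpr (by positivity : (0:ℝ) ≤ ((1+δ)/δ)*v))
    (by positivity : (0:ℝ) ≤ 1/(1+δ)) (by positivity : (0:ℝ) ≤ δ/(1+δ))
    (by field_simp : 1/(1+δ) + δ/(1+δ) = 1)
  simp only [smul_eq_mul] at hcx
  have e0 : 1/(1+δ) * ((1+δ)*u) + δ/(1+δ) * ((1+δ)/δ*v) = u + v := by field_simp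
  rw [e0] at hcx
  refine hcx.trans_eq ?_
  have e1 : ((1+δ)*u) ^ p = (1+δ)^p * u^p := Real.mul_rpow (le_of_lt h1δ) hu
  have e2 : ((1+δ)/δ*v) ^ p = ((1+δ)/δ)^p * v^p := Real.mul_rpow (by positivity) hv
  rw [e1, e2, Real.rpow_sub h1δ, Real.rpow_sub h1δ', Real.rpow_one, Real.rpow_one]
  have e3 : ((1+δ)/δ)^p = (1+1/δ)^p := by rw [show (1+δ)/δ = 1 + 1/δ by field_simp; ring]
  rw [e3]
  field_simp
  ring

lemma aux_key (p δ a b : ℝ) (hp : 1 ≤ p) (hδ : 0 < δ) :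
    |a| ^ p / (1 + δ) ^ (p - 1) - |b| ^ p / δ ^ (p - 1) ≤ |a + b| ^ p := by
  have h1δ : (0:ℝ) < (1+δ) ^ (p-1) := Real.rpow_pos_of_pos (by linarith) _
  have hδp : (0:ℝ) < δ ^ (p-1) := Real.rpow_pos_of_pos hδ _
  have habs : |a| ≤ |a + b| + |b| := by
    calc |a| = |(a+b) + (-b)| := by ring_nf
    _ ≤ |a+b| + |(-b)| := abs_add_le _ _
    _ = |a+b| + |b| := by rw [abs_neg]
  have h1 : |a| ^ p ≤ (|a+b| + |b|) ^ p :=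
    Real.rpow_le_rpow (abs_nonneg _) habs (by linarith)
  have h2 := aux_convex p δ (|a+b|) (|b|) hp hδ (abs_nonneg _) (abs_nonneg _)
  have key : |a| ^ p ≤ (1+δ)^(p-1) * |a+b|^p + (1+1/δ)^(p-1) * |b|^p := h1.trans h2
  have e4 : (1+1/δ)^(p-1) / (1+δ)^(p-1) = 1 / δ^(p-1) := by
    rw [← Real.div_rpow (by positivity) (by linarith), show (1+1/δ)/(1+δ) = 1/δ by field_simp; ring,
      Real.div_rpow zero_le_one (le_of_lt hδ), Real.one_rpow]
  rw [div_sub_div _ _ (ne_of_gt h1δ) (ne_of_gt hδp), div_le_iff₀ (by positivity)]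
  have e5 : (1+1/δ)^(p-1) * δ^(p-1) = (1+δ)^(p-1) := by
    rw [← Real.mul_rpow (by positivity) (le_of_lt hδ), show (1+1/δ)*δ = 1+δ by field_simp; ring]
  nlinarith [mul_pos h1δ hδp, Real.rpow_nonneg (abs_nonneg (a+b)) p,
    Real.rpow_nonneg (abs_nonneg b) p]


lemma aux_abel {ι : Type*} [DecidableEq ι] (c : ℝ) :
    ∀ (k : ℕ) (S : Finset ι) (a b : ι → ℝ), S.card ≤ k → (∀ v ∈ S, 0 ≤ a v) →
    (∀ τ : ℝ, ∑ v ∈ S.filter (fun v => τ < a v), b v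
        ≤ c * (S.filter (fun v => τ < a v)).card) →
    ∑ v ∈ S, b v * a v ≤ c * ∑ v ∈ S, a v := by
  intro k
  induction k with
  | zero =>
    intro S a b hcard _ _
    rw [Finset.card_eq_zero.mp (Nat.le_zero.mp hcard)]
    simp
  | succ k ih =>
    intro S a b hcard ha hτ
    rcases S.eq_empty_or_nonempty with rfl | hs
    · simp
    obtain ⟨v₀, hv₀, hmin⟩ := S.exists_min_image a hs
    set α := a v₀ with hα
    have hα0 : 0 ≤ α := ha v₀ hv₀
    set S' := S.filter (fun v => α < a v) with hS'
    have hsub : S' ⊆ S := Finset.filter_subset _ _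
    have hv₀' : v₀ ∉ S' := by simp [hS']; exact fun _ => hα.symm.le
    have hss : S' ⊂ S := Finset.ssubset_iff_of_subset hsub |>.mpr ⟨v₀, hv₀, hv₀'⟩
    have hcard' : S'.card ≤ k := by
      have := Finset.card_lt_card hss
      omega
    -- IH applied to S' with shifted a
    have hIH : ∑ v ∈ S', b v * (a v - α) ≤ c * ∑ v ∈ S', (a v - α) := by
      refine ih S' (fun v => a v - α) b hcard' (fun v hv => ?_) (fun τ => ?_)
      · have : α < a v := (Finset.mem_filter.mp hv).2
        show (0:ℝ) ≤ a v - α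
        linarith
      · have hset : S'.filter (fun v => τ < a v - α)
            = S.filter (fun v => max τ 0 + α < a v) := by
          ext v
          simp only [hS', Finset.mem_filter, and_assoc]
          constructor
          · rintro ⟨hv, h1, h2⟩
            refine ⟨hv, ?_⟩
            rcases le_total τ 0 with h | h
            · rw [max_eq_right h]; linarith
            · rw [max_eq_left h]; linarith
          · rintro ⟨hv, h1⟩
            have h2 : α ≤ max τ 0 + α := by
              have := le_max_right τ 0; linarith
            have h3 : τ + α ≤ max τ 0 + α := by
              have := le_max_left τ 0; linarith
            exact ⟨hv, by linarith, by linarith⟩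
        show ∑ v ∈ S'.filter (fun v => τ < a v - α), b v
            ≤ c * (S'.filter (fun v => τ < a v - α)).card
        rw [hset]
        exact hτ (max τ 0 + α)
    have hall : S.filter (fun v => (-1:ℝ) < a v) = S :=
      Finset.filter_true_of_mem (fun v hv => by have := ha v hv; linarith)
    have hSb : ∑ v ∈ S, b v ≤ c * S.card := by
      have := hτ (-1); rwa [hall] at this
    have e1 : ∑ v ∈ S, b v * a v = ∑ v ∈ S', b v * (a v - α) + α * ∑ v ∈ S, b v := by
      have e1a : ∑ v ∈ S', b v * (a v - α) = ∑ v ∈ S, b v * (a v - α) := by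
        refine Finset.sum_filter_of_ne (fun v hv hne => ?_)
        by_contra h
        push_neg at h
        have : a v = α := le_antisymm h (hmin v hv)
        rw [this] at hne
        simp at hne
      rw [e1a, Finset.mul_sum, ← Finset.sum_add_distrib]
      exact Finset.sum_congr rfl (fun v _ => by ring)
    have e2 : ∑ v ∈ S', (a v - α) = ∑ v ∈ S, a v - α * S.card := by
      have e2a : ∑ v ∈ S', (a v - α) = ∑ v ∈ S, (a v - α) := by
        refine Finset.sum_filter_of_ne (fun v hv hne => ?_)
        rcases lt_or_eq_of_le (hmin v hv) with h | h
        · exact h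
        · rw [← h] at hne; simp at hne
      rw [e2a, Finset.sum_sub_distrib, Finset.sum_const, nsmul_eq_mul]
      ring
    rw [e1]
    have : α * ∑ v ∈ S, b v ≤ α * (c * S.card) := mul_le_mul_of_nonneg_left hSb hα0
    rw [e2] at hIH
    linarith

lemma lpNorm_pow {ι : Type*} [Fintype ι] {p : ℝ} (hp : 0 < p) (y : ι → ℝ) :
    lpNorm p y ^ p = ∑ i, |y i| ^ p := by
  have h : 0 ≤ ∑ i, |y i| ^ p :=
    Finset.sum_nonneg fun i _ => Real.rpow_nonneg (abs_nonneg _) _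
  rw [lpNorm, ← Real.rpow_mul h, one_div_mul_cancel hp.ne', Real.rpow_one]

/-- **Lower bound in the ℓ_p-RIP lemma.** If `G_A` is `t`-left-regular and a
`(γ, μ)`-unique expander with maximum right degree `s_max`, then for any `p ≥ 1`,
`δ₁ > 0` and `γn`-sparse `x`,
`‖Ax‖_p^p ≥ (t(1-μ)/(1+δ₁)^(p-1) - (μt/δ₁^(p-1))(s_max-1)^(p-1)) ‖x‖_p^p`. -/
theorem rip_lower_bound {m n : ℕ} (t smax : ℕ) (γ μ : ℝ)
    (A : Matrix (Fin m) (Fin n) ℝ)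
    (hsign : ∀ r u, A r u = 0 ∨ A r u = 1 ∨ A r u = -1)
    (hreg : LeftRegular (matNbrs A) t)
    (hexp : UniqueExpander (matNbrs A) t γ μ)
    (hsmax : smax = Finset.univ.sup (fun r : Fin m => rightDeg (matNbrs A) r))
    (p δ₁ : ℝ) (hp : 1 ≤ p) (hδ : 0 < δ₁) :
    ∀ x : Fin n → ℝ, Sparse (γ * n) x →
      ((t : ℝ) * (1 - μ) / (1 + δ₁) ^ (p - 1) -
          μ * t / δ₁ ^ (p - 1) * ((smax : ℝ) - 1) ^ (p - 1)) * lpNorm p x ^ p ≤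
        lpNorm p (A.mulVec x) ^ p := by
  classical
  intro x hx
  have hp0 : (0:ℝ) < p := lt_of_lt_of_le one_pos hp
  have hp1 : (0:ℝ) ≤ p - 1 := by linarith
  set N := matNbrs A with hNdef
  have hmemN : ∀ (r : Fin m) (u : Fin n), r ∈ N u ↔ A r u ≠ 0 := by
    intro r u; rw [hNdef]; simp [matNbrs]
  set S : Finset (Fin n) := Finset.univ.filter (fun u => x u ≠ 0) with hSdef
  have hmemS : ∀ u, u ∈ S ↔ x u ≠ 0 := by intro u; rw [hSdef]; simp
  set a : Fin n → ℝ := fun v => |x v| ^ p with hadef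
  have ha : ∀ v, 0 ≤ a v := fun v => Real.rpow_nonneg (abs_nonneg _) _
  have hxnorm : lpNorm p x ^ p = ∑ v ∈ S, a v := by
    rw [lpNorm_pow hp0 x]
    refine (Finset.sum_filter_of_ne (fun v _ hne => ?_)).symm
    intro h0
    exact hne (by rw [h0, abs_zero, Real.zero_rpow hp0.ne'])
  -- trivial case : x = 0
  by_cases hxz : ∀ u, x u = 0
  · have hS0 : S = ∅ := by
      ext u; simp [hmemS, hxz]
    have l2 : lpNorm p (A.mulVec x) ^ p = 0 := by
      rw [lpNorm_pow hp0]
      refine Finset.sum_eq_zero fun r _ => ?_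
      have : A.mulVec x r = 0 := by
        simp [Matrix.mulVec, dotProduct, hxz]
      rw [this, abs_zero, Real.zero_rpow hp0.ne']
    rw [l2, hxnorm, hS0]
    simp
  push_neg at hxz
  obtain ⟨u₀, hu₀⟩ := hxz
  have hSne : S.Nonempty := ⟨u₀, (hmemS u₀).mpr hu₀⟩
  -- trivial case : t = 0
  by_cases ht0 : t = 0
  · have hA0 : ∀ r u, A r u = 0 := by
      intro r u
      by_contra hA
      have hr : r ∈ N u := (hmemN r u).mpr hA
      have hNu : N u = ∅ := Finset.card_eq_zero.mp (by rw [hreg u, ht0])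
      rw [hNu] at hr; exact absurd hr (Finset.notMem_empty r)
    have l2 : lpNorm p (A.mulVec x) ^ p = 0 := by
      rw [lpNorm_pow hp0]
      refine Finset.sum_eq_zero fun r _ => ?_
      have : A.mulVec x r = 0 := by
        simp [Matrix.mulVec, dotProduct, hA0]
      rw [this, abs_zero, Real.zero_rpow hp0.ne']
    rw [l2, ht0]
    push_cast
    simp
  -- main case
  have hsmax1 : 1 ≤ smax := by
    have htpos : 0 < (N u₀).card := by rw [hreg u₀]; omega
    obtain ⟨r₀, hr₀⟩ := Finset.card_pos.mp htpos
    have h1 : 1 ≤ rightDeg N r₀ := by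
      refine Finset.card_pos.mpr ⟨u₀, ?_⟩
      exact Finset.mem_filter.mpr ⟨Finset.mem_univ _, hr₀⟩
    calc 1 ≤ rightDeg N r₀ := h1
    _ ≤ smax := by rw [hsmax]; exact Finset.le_sup (Finset.mem_univ r₀)
  have hsm : (0:ℝ) ≤ (smax:ℝ) - 1 := by
    have : (1:ℝ) ≤ smax := by exact_mod_cast hsmax1
    linarith
  set Vr : Fin m → Finset (Fin n) := fun r => S.filter (fun v => r ∈ N v) with hVrdef
  have hVrS : ∀ r, Vr r ⊆ S := fun r => Finset.filter_subset _ _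
  have hVrmem : ∀ r v, v ∈ Vr r ↔ v ∈ S ∧ r ∈ N v := by
    intro r v; rw [hVrdef]; simp
  set E := nbrs N S with hEdef
  have hE' : E = S.biUnion N := hEdef
  have hmemE : ∀ r, r ∈ E ↔ (Vr r).Nonempty := by
    intro r
    rw [hE']
    constructor
    · intro hr
      obtain ⟨v, hvS, hvN⟩ := Finset.mem_biUnion.mp hr
      exact ⟨v, (hVrmem r v).mpr ⟨hvS, hvN⟩⟩
    · rintro ⟨v, hv⟩
      obtain ⟨hvS, hvN⟩ := (hVrmem r v).mp hv
      exact Finset.mem_biUnion.mpr ⟨v, hvS, hvN⟩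
  have hchoice : ∀ r : Fin m, ∃ v : Fin n, (Vr r).Nonempty →
      v ∈ Vr r ∧ ∀ w ∈ Vr r, a w ≤ a v := by
    intro r
    by_cases h : (Vr r).Nonempty
    · obtain ⟨v, hv, hmax⟩ := Finset.exists_max_image (Vr r) a h
      exact ⟨v, fun _ => ⟨hv, hmax⟩⟩
    · exact ⟨u₀, fun h' => absurd h' h⟩
  choose u₁ hu₁ using hchoice
  set T : Fin n → Finset (Fin m) := fun v => E.filter (fun r => u₁ r = v) with hTdef
  have hTmem : ∀ v r, r ∈ T v ↔ r ∈ E ∧ u₁ r = v := by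
    intro v r; rw [hTdef]; simp
  have hScard : (S.card : ℝ) ≤ γ * n := by
    have hsupp : Function.support x = ↑S := by
      ext u; simp [hmemS u, Function.mem_support]
    rw [Sparse, hsupp, Set.ncard_coe_finset] at hx
    exact hx
  -- key counting claim
  have key : ∀ τ : ℝ, (t:ℝ) * (1-μ) * ((S.filter (fun v => τ < a v)).card : ℝ)
      ≤ ∑ v ∈ S.filter (fun v => τ < a v), ((T v).card : ℝ) := by
    intro τ
    set Sτ := S.filter (fun v => τ < a v) with hSτ
    have hsub : Sτ ⊆ S := Finset.filter_subset _ _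
    have hcard : (Sτ.card : ℝ) ≤ γ * n :=
      le_trans (by exact_mod_cast Finset.card_le_card hsub) hScard
    have h1 := hexp Sτ hcard
    have h2 : uniqueNbrs N Sτ ⊆ E.filter (fun r => u₁ r ∈ Sτ) := by
      intro r hr
      have hr1 : r ∈ nbrs N Sτ := Finset.mem_of_mem_filter _ hr
      obtain ⟨v₀, hv₀Sτ, hv₀N⟩ := Finset.mem_biUnion.mp hr1
      have hv₀S : v₀ ∈ S := hsub hv₀Sτ
      have hv₀Vr : v₀ ∈ Vr r := (hVrmem r v₀).mpr ⟨hv₀S, hv₀N⟩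
      have hne : (Vr r).Nonempty := ⟨v₀, hv₀Vr⟩
      obtain ⟨hmem, hmax⟩ := hu₁ r hne
      have hrE : r ∈ E := (hmemE r).mpr hne
      have hτv₀ : τ < a v₀ := (Finset.mem_filter.mp hv₀Sτ).2
      have hlt : τ < a (u₁ r) := lt_of_lt_of_le hτv₀ (hmax v₀ hv₀Vr)
      exact Finset.mem_filter.mpr ⟨hrE,
        Finset.mem_filter.mpr ⟨hVrS r hmem, hlt⟩⟩
    have h3 : (uniqueNbrs N Sτ).card ≤ (E.filter (fun r => u₁ r ∈ Sτ)).card :=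
      Finset.card_le_card h2
    have h4 : (E.filter (fun r => u₁ r ∈ Sτ)).card = ∑ v ∈ Sτ, (T v).card := by
      rw [Finset.card_eq_sum_card_fiberwise (f := u₁) (s := E.filter (fun r => u₁ r ∈ Sτ)) (t := Sτ)
        (fun r hr => (Finset.mem_filter.mp hr).2)]
      refine Finset.sum_congr rfl fun v hv => ?_
      congr 1
      ext r
      rw [Finset.mem_filter, Finset.mem_filter, hTmem]
      constructor
      · rintro ⟨⟨h5, _⟩, h6⟩; exact ⟨h5, h6⟩
      · rintro ⟨h5, h6⟩; exact ⟨⟨h5, h6 ▸ hv⟩, h6⟩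
    calc (t:ℝ)*(1-μ)*(Sτ.card:ℝ) ≤ ((uniqueNbrs N Sτ).card : ℝ) := h1
    _ ≤ (∑ v ∈ Sτ, (T v).card : ℕ) := by exact_mod_cast h3.trans_eq h4
    _ = ∑ v ∈ Sτ, ((T v).card : ℝ) := by push_cast; rfl
  -- Abel-type bounds
  have abel1 : (t:ℝ) * (1-μ) * ∑ v ∈ S, a v ≤ ∑ v ∈ S, ((T v).card : ℝ) * a v := by
    have h := aux_abel (-((t:ℝ)*(1-μ))) S.card S a (fun v => -((T v).card:ℝ))
      le_rfl (fun v _ => ha v) (fun τ => ?_)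
    · have e : ∑ v ∈ S, -((T v).card:ℝ) * a v = -∑ v ∈ S, ((T v).card:ℝ) * a v := by
        rw [← Finset.sum_neg_distrib]
        exact Finset.sum_congr rfl fun v _ => by ring
      rw [e] at h
      linarith
    · have hk := key τ
      have e : ∑ v ∈ S.filter (fun v => τ < a v), -((T v).card:ℝ)
          = -∑ v ∈ S.filter (fun v => τ < a v), ((T v).card:ℝ) :=
        Finset.sum_neg_distrib _
      rw [e]
      linarith
  have abel2 : ∑ v ∈ S, ((t:ℝ) - (T v).card) * a v ≤ μ * t * ∑ v ∈ S, a v := by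
    refine aux_abel (μ*t) S.card S a (fun v => (t:ℝ) - (T v).card) le_rfl
      (fun v _ => ha v) (fun τ => ?_)
    have hk := key τ
    rw [Finset.sum_sub_distrib, Finset.sum_const, nsmul_eq_mul]
    have e : (t:ℝ)*(1-μ)*((S.filter (fun v => τ < a v)).card:ℝ)
        = (t:ℝ)*((S.filter (fun v => τ < a v)).card:ℝ)
          - μ*(t:ℝ)*((S.filter (fun v => τ < a v)).card:ℝ) := by ring
    rw [e] at hk
    linarith
  -- per-row bound
  set K : ℝ := ((smax:ℝ)-1)^(p-1) / δ₁^(p-1) with hKdef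
  have hδp : (0:ℝ) < δ₁ ^ (p-1) := Real.rpow_pos_of_pos hδ _
  have hK0 : 0 ≤ K := div_nonneg (Real.rpow_nonneg hsm _) (le_of_lt hδp)
  have hrow : ∀ r ∈ E, a (u₁ r) / (1+δ₁)^(p-1) - K * ∑ v ∈ (Vr r).erase (u₁ r), a v
      ≤ |A.mulVec x r| ^ p := by
    intro r hrE
    have hne : (Vr r).Nonempty := (hmemE r).mp hrE
    obtain ⟨hmem, hmax⟩ := hu₁ r hne
    set D := (Vr r).erase (u₁ r) with hD
    have habs1 : ∀ v ∈ Vr r, |A r v| = 1 := by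
      intro v hv
      have hA : A r v ≠ 0 := (hmemN r v).mp ((hVrmem r v).mp hv).2
      rcases hsign r v with h | h | h
      · exact absurd h hA
      · rw [h]; norm_num
      · rw [h]; norm_num
    have hmv : A.mulVec x r = A r (u₁ r) * x (u₁ r) + ∑ v ∈ D, A r v * x v := by
      have e0 : A.mulVec x r = ∑ u, A r u * x u := by
        simp [Matrix.mulVec, dotProduct]
      have e1 : A.mulVec x r = ∑ v ∈ Vr r, A r v * x v := by
        rw [e0]
        symm
        refine Finset.sum_subset (Finset.subset_univ _) (fun u _ hu => ?_)
        by_cases hxu : x u = 0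
        · rw [hxu, mul_zero]
        · have huS : u ∈ S := (hmemS u).mpr hxu
          have hnN : r ∉ N u := fun hN => hu ((hVrmem r u).mpr ⟨huS, hN⟩)
          have : A r u = 0 := by
            by_contra hA; exact hnN ((hmemN r u).mpr hA)
          rw [this, zero_mul]
      rw [e1, ← Finset.add_sum_erase _ _ hmem]
    have hcz := aux_key p δ₁ (A r (u₁ r) * x (u₁ r)) (∑ v ∈ D, A r v * x v) hp hδ
    rw [← hmv] at hcz
    have habs2 : |A r (u₁ r) * x (u₁ r)| = |x (u₁ r)| := by
      rw [abs_mul, habs1 _ hmem, one_mul]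
    rw [habs2] at hcz
    have hzb : |∑ v ∈ D, A r v * x v| ≤ ∑ v ∈ D, |x v| := by
      refine (Finset.abs_sum_le_sum_abs _ _).trans (le_of_eq ?_)
      refine Finset.sum_congr rfl fun v hv => ?_
      rw [abs_mul, habs1 v (Finset.mem_of_mem_erase hv), one_mul]
    have hDcard : (D.card : ℝ) ≤ (smax:ℝ) - 1 := by
      have h1 : D.card + 1 = (Vr r).card := by
        rw [hD, Finset.card_erase_of_mem hmem]
        have := Finset.card_pos.mpr hne
        omega
      have h2 : (Vr r).card ≤ rightDeg N r := by
        refine Finset.card_le_card fun v hv => ?_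
        exact Finset.mem_filter.mpr ⟨Finset.mem_univ v, ((hVrmem r v).mp hv).2⟩
      have h3 : rightDeg N r ≤ smax := by
        rw [hsmax]; exact Finset.le_sup (Finset.mem_univ r)
      have h4 : D.card + 1 ≤ smax := by omega
      have h5 : ((D.card + 1 : ℕ) : ℝ) ≤ (smax : ℝ) := by exact_mod_cast h4
      push_cast at h5
      linarith
    have hzp : |∑ v ∈ D, A r v * x v| ^ p ≤ ((smax:ℝ)-1)^(p-1) * ∑ v ∈ D, a v := by
      calc |∑ v ∈ D, A r v * x v| ^ p ≤ (∑ v ∈ D, |x v|) ^ p :=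
        Real.rpow_le_rpow (abs_nonneg _) hzb (le_of_lt hp0)
      _ ≤ (D.card:ℝ)^(p-1) * ∑ v ∈ D, |x v| ^ p :=
        aux_pm p hp D _ (fun v _ => abs_nonneg _)
      _ ≤ ((smax:ℝ)-1)^(p-1) * ∑ v ∈ D, a v := by
        refine mul_le_mul_of_nonneg_right
          (Real.rpow_le_rpow (Nat.cast_nonneg _) hDcard hp1)
          (Finset.sum_nonneg fun v _ => Real.rpow_nonneg (abs_nonneg _) _)
    have hKb : |∑ v ∈ D, A r v * x v| ^ p / δ₁^(p-1) ≤ K * ∑ v ∈ D, a v := by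
      rw [hKdef, div_mul_eq_mul_div]
      exact (div_le_div_iff_of_pos_right hδp).mpr hzp
    linarith
  -- double counting
  have hmapsto : ∀ r ∈ E, u₁ r ∈ S := fun r hr => hVrS r (hu₁ r ((hmemE r).mp hr)).1
  have sum1 : ∑ r ∈ E, a (u₁ r) = ∑ v ∈ S, ((T v).card : ℝ) * a v := by
    rw [← Finset.sum_fiberwise_of_maps_to (g := u₁) (t := S) hmapsto (fun r => a (u₁ r))]
    refine Finset.sum_congr rfl fun v hv => ?_
    have e1 : ∑ r ∈ E.filter (fun r => u₁ r = v), a (u₁ r)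
        = ∑ r ∈ E.filter (fun r => u₁ r = v), a v :=
      Finset.sum_congr rfl fun r hr => by rw [(Finset.mem_filter.mp hr).2]
    rw [e1, Finset.sum_const, nsmul_eq_mul]
  have sum2 : ∑ r ∈ E, ∑ v ∈ (Vr r).erase (u₁ r), a v
      = ∑ v ∈ S, ((t:ℝ) - (T v).card) * a v := by
    have e1 : ∀ r ∈ E, ∑ v ∈ (Vr r).erase (u₁ r), a v
        = ∑ v ∈ S, if r ∈ N v ∧ v ≠ u₁ r then a v else 0 := by
      intro r _
      rw [← Finset.sum_filter]
      apply Finset.sum_congr _ (fun _ _ => rfl)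
      ext v
      simp only [Finset.mem_erase, Finset.mem_filter, hVrmem]
      tauto
    rw [Finset.sum_congr rfl e1, Finset.sum_comm]
    refine Finset.sum_congr rfl fun v hv => ?_
    rw [← Finset.sum_filter, Finset.sum_const, nsmul_eq_mul]
    have hTv : T v = (N v).filter (fun r => u₁ r = v) := by
      ext r
      rw [hTmem, Finset.mem_filter]
      constructor
      · rintro ⟨hrE, hrv⟩
        have hne := (hmemE r).mp hrE
        have h6 : r ∈ N (u₁ r) := ((hVrmem r (u₁ r)).mp (hu₁ r hne).1).2
        rw [hrv] at h6
        exact ⟨h6, hrv⟩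
      · rintro ⟨hrN, hrv⟩
        exact ⟨(hmemE r).mpr ⟨v, (hVrmem r v).mpr ⟨hv, hrN⟩⟩, hrv⟩
    have hfil : E.filter (fun r => r ∈ N v ∧ v ≠ u₁ r)
        = (N v).filter (fun r => ¬ (u₁ r = v)) := by
      ext r
      rw [Finset.mem_filter, Finset.mem_filter]
      constructor
      · rintro ⟨_, hrN, hne⟩
        exact ⟨hrN, fun h => hne h.symm⟩
      · rintro ⟨hrN, hne⟩
        exact ⟨(hmemE r).mpr ⟨v, (hVrmem r v).mpr ⟨hv, hrN⟩⟩, hrN, fun h => hne h.symm⟩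
    have hcards := Finset.card_filter_add_card_filter_not
      (s := N v) (p := fun r => u₁ r = v)
    have hNvcard : (N v).card = t := hreg v
    have hsum : (T v).card + ((N v).filter (fun r => ¬ (u₁ r = v))).card = t := by
      rw [hTv]; rw [hNvcard] at hcards; exact hcards
    have hcast : (((N v).filter (fun r => ¬ (u₁ r = v))).card : ℝ)
        = (t:ℝ) - ((T v).card:ℝ) := by
      have := congrArg (fun k : ℕ => (k:ℝ)) hsum
      push_cast at this
      linarith
    rw [hfil, hcast]
  -- final assembly
  have h1δ : (0:ℝ) < (1+δ₁)^(p-1) := Real.rpow_pos_of_pos (by linarith) _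
  have step1 : ∑ r ∈ E, |A.mulVec x r| ^ p ≤ ∑ r, |A.mulVec x r| ^ p :=
    Finset.sum_le_sum_of_subset_of_nonneg (Finset.subset_univ _)
      (fun r _ _ => Real.rpow_nonneg (abs_nonneg _) _)
  have step2 : ∑ r ∈ E, (a (u₁ r) / (1+δ₁)^(p-1) - K * ∑ v ∈ (Vr r).erase (u₁ r), a v)
      ≤ ∑ r ∈ E, |A.mulVec x r| ^ p := Finset.sum_le_sum hrow
  have step3 : ∑ r ∈ E, (a (u₁ r) / (1+δ₁)^(p-1) - K * ∑ v ∈ (Vr r).erase (u₁ r), a v)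
      = (∑ v ∈ S, ((T v).card:ℝ) * a v) / (1+δ₁)^(p-1)
        - K * ∑ v ∈ S, ((t:ℝ) - (T v).card) * a v := by
    rw [Finset.sum_sub_distrib, ← Finset.sum_div, sum1, ← Finset.mul_sum, sum2]
  have step4 : (t:ℝ)*(1-μ) * (∑ v ∈ S, a v) / (1+δ₁)^(p-1)
      ≤ (∑ v ∈ S, ((T v).card:ℝ) * a v) / (1+δ₁)^(p-1) :=
    (div_le_div_iff_of_pos_right h1δ).mpr abel1
  have step5 : K * ∑ v ∈ S, ((t:ℝ) - (T v).card)*a v ≤ K * (μ*t*∑ v ∈ S, a v) :=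
    mul_le_mul_of_nonneg_left abel2 hK0
  have hfin : lpNorm p (A.mulVec x) ^ p = ∑ r, |A.mulVec x r| ^ p := lpNorm_pow hp0 _
  have e : ((t:ℝ)*(1-μ)/(1+δ₁)^(p-1) - μ*(t:ℝ)/δ₁^(p-1)*((smax:ℝ)-1)^(p-1)) * ∑ v ∈ S, a v
      = (t:ℝ)*(1-μ)*(∑ v ∈ S, a v)/(1+δ₁)^(p-1) - K*(μ*(t:ℝ)*∑ v ∈ S, a v) := by
    rw [hKdef]
    ring
  rw [hxnorm, hfin]
  linarith
end

section
/- Let A ∈ {0,1,−1}^{m×n} be such that the bipartite graph G_A is t-left-regular and a (γ,μ)-unique expander, and let s_max be the maximum degree of a right vertex of G_A. Then for any p ≥ 1, any δ₂ ∈ (0,1), and any γn-sparse x ∈ ℝ^n, ‖Ax‖_p^p ≤ ( t/(1−δ₂)^{p−1} + (μ t / δ₂^{p−1})·(s_max − 1)^{p−1} ) · ‖x‖_p^p. -/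
open Finset

lemma my_pow_mean {ι : Type*} (T : Finset ι) (y : ι → ℝ) (hy : ∀ i ∈ T, 0 ≤ y i) {p : ℝ}
    (hp : 1 ≤ p) : (∑ i ∈ T, y i) ^ p ≤ (T.card : ℝ) ^ (p - 1) * ∑ i ∈ T, y i ^ p := by
  rcases T.eq_empty_or_nonempty with rfl | hT
  · simp [Real.zero_rpow (by linarith : p ≠ 0)]
  · have hd : (0:ℝ) < T.card := by exact_mod_cast hT.card_pos
    have h := Real.rpow_arith_mean_le_arith_mean_rpow T (fun _ => (T.card:ℝ)⁻¹) y
      (fun i _ => by positivity) (by simp [Finset.sum_const, hd.ne']) hy hp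
    rw [← Finset.mul_sum, ← Finset.mul_sum, Real.mul_rpow (by positivity)
      (Finset.sum_nonneg hy)] at h
    have hpos : (0:ℝ) < ((T.card:ℝ)⁻¹) ^ p := Real.rpow_pos_of_pos (by positivity) p
    calc (∑ i ∈ T, y i) ^ p
        = (((T.card:ℝ)⁻¹) ^ p)⁻¹ * (((T.card:ℝ)⁻¹) ^ p * (∑ i ∈ T, y i) ^ p) := by
          field_simp
      _ ≤ (((T.card:ℝ)⁻¹) ^ p)⁻¹ * ((T.card:ℝ)⁻¹ * ∑ i ∈ T, y i ^ p) := by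
          exact mul_le_mul_of_nonneg_left h (by positivity)
      _ = (T.card : ℝ) ^ (p - 1) * ∑ i ∈ T, y i ^ p := by
          rw [Real.inv_rpow hd.le, inv_inv, Real.rpow_sub hd, Real.rpow_one]; ring

lemma my_two_split {a b δ p : ℝ} (ha : 0 ≤ a) (hb : 0 ≤ b) (hδ0 : 0 < δ) (hδ1 : δ < 1)
    (hp : 1 ≤ p) : (a + b) ^ p ≤ a ^ p / (1 - δ) ^ (p - 1) + b ^ p / δ ^ (p - 1) := by
  have h1δ : (0:ℝ) < 1 - δ := by linarith
  have h := Real.rpow_arith_mean_le_arith_mean_rpow (Finset.univ : Finset (Fin 2))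
    (fun i => if i = 0 then 1 - δ else δ) (fun i => if i = 0 then a / (1-δ) else b / δ)
    (fun i _ => by split <;> positivity)
    (by simp [Fin.sum_univ_two]) (fun i _ => by split <;> positivity) hp
  simp only [Fin.sum_univ_two, if_pos rfl] at h
  norm_num at h
  have e1 : (1 - δ) * (a / (1 - δ)) = a := by field_simp
  have e2 : δ * (b / δ) = b := by field_simp
  rw [e1, e2] at h
  refine h.trans (le_of_eq ?_)
  rw [Real.div_rpow ha h1δ.le, Real.div_rpow hb hδ0.le]
  rw [Real.rpow_sub h1δ, Real.rpow_sub hδ0, Real.rpow_one]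
  field_simp
  simp only [Real.rpow_one]
  ring

lemma my_swap_tri (k : ℕ) (f : ℕ → ℕ → ℝ) :
    ∑ i ∈ Finset.range k, ∑ j ∈ Finset.Ico i k, f i j
      = ∑ j ∈ Finset.range k, ∑ i ∈ Finset.range (j+1), f i j := by
  have h1 : ∀ i ∈ Finset.range k, ∑ j ∈ Finset.Ico i k, f i j
      = ∑ j ∈ Finset.range k, if i ≤ j then f i j else 0 := by
    intro i _
    rw [← Finset.sum_filter]
    congr 1
    ext j; simp only [Finset.mem_Ico, Finset.mem_range, Finset.mem_filter]; omega
  rw [Finset.sum_congr rfl h1, Finset.sum_comm]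
  refine Finset.sum_congr rfl fun j hj => ?_
  rw [← Finset.sum_filter]
  refine Finset.sum_congr ?_ fun _ _ => rfl
  have hjk := Finset.mem_range.mp hj
  ext i; simp only [Finset.mem_filter, Finset.mem_range]
  omega

lemma my_abel (k : ℕ) (c w : ℕ → ℝ) (K : ℝ)
    (hwa : ∀ i j, i ≤ j → w j ≤ w i) (hwz : ∀ i, k ≤ i → w i = 0)
    (hpre : ∀ j : ℕ, (∑ i ∈ Finset.range (j+1), c i) ≤ K * (j+1)) :
    ∑ i ∈ Finset.range k, c i * w i ≤ K * ∑ i ∈ Finset.range k, w i := by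
  set d : ℕ → ℝ := fun j => w j - w (j+1) with hd
  have hd0 : ∀ j, 0 ≤ d j := fun j => by
    simp only [hd, sub_nonneg]; exact hwa j (j+1) (by omega)
  have htel : ∀ i, i ≤ k → ∑ j ∈ Finset.Ico i k, d j = w i := by
    intro i hik
    have h1 : ∑ j ∈ Finset.Ico i k, (w (j+1) - w j) = w k - w i := by
      rw [Finset.sum_Ico_eq_sub _ hik, Finset.sum_range_sub, Finset.sum_range_sub]
      ring
    have h2 : ∑ j ∈ Finset.Ico i k, d j = -∑ j ∈ Finset.Ico i k, (w (j+1) - w j) := by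
      rw [← Finset.sum_neg_distrib]
      refine Finset.sum_congr rfl fun j _ => by simp [hd]
    rw [h2, h1, hwz k le_rfl]; ring
  calc ∑ i ∈ Finset.range k, c i * w i
      = ∑ i ∈ Finset.range k, ∑ j ∈ Finset.Ico i k, c i * d j := by
        refine Finset.sum_congr rfl fun i hi => ?_
        rw [← Finset.mul_sum, htel i (le_of_lt (Finset.mem_range.mp hi))]
    _ = ∑ j ∈ Finset.range k, ∑ i ∈ Finset.range (j+1), c i * d j := my_swap_tri k _
    _ = ∑ j ∈ Finset.range k, (∑ i ∈ Finset.range (j+1), c i) * d j := by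
        refine Finset.sum_congr rfl fun j _ => by rw [Finset.sum_mul]
    _ ≤ ∑ j ∈ Finset.range k, (K * (j+1)) * d j := by
        refine Finset.sum_le_sum fun j _ => mul_le_mul_of_nonneg_right (hpre j) (hd0 j)
    _ = K * ∑ j ∈ Finset.range k, ∑ i ∈ Finset.range (j+1), d j := by
        rw [Finset.mul_sum]
        refine Finset.sum_congr rfl fun j _ => ?_
        rw [Finset.sum_const, Finset.card_range, nsmul_eq_mul]
        push_cast; ring
    _ = K * ∑ i ∈ Finset.range k, w i := by
        rw [← my_swap_tri k (fun i j => d j)]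
        congr 1
        exact Finset.sum_congr rfl fun i hi => htel i (le_of_lt (Finset.mem_range.mp hi))

lemma my_dc1 {α β : Type*} [Fintype α] [Fintype β] [DecidableEq β]
    (J : α → Finset β) (w : β → ℝ) :
    ∑ r : α, ∑ i ∈ J r, w i
      = ∑ i : β, ((Finset.univ.filter (fun r => i ∈ J r)).card : ℝ) * w i := by
  have h1 : ∀ r : α, ∑ i ∈ J r, w i = ∑ i : β, if i ∈ J r then w i else 0 := by
    intro r
    rw [Finset.sum_ite_mem, Finset.univ_inter]
  simp_rw [h1]
  rw [Finset.sum_comm]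
  refine Finset.sum_congr rfl fun i _ => ?_
  rw [← Finset.sum_filter, Finset.sum_const, nsmul_eq_mul]

lemma my_dc2 {α β : Type*} [Fintype α] [DecidableEq β]
    (J : α → Finset β) (P : Finset β) :
    ∑ i ∈ P, ((Finset.univ.filter (fun r => i ∈ J r)).card : ℝ)
      = ∑ r : α, ((J r ∩ P).card : ℝ) := by
  have h1 : ∀ i, ((Finset.univ.filter (fun r : α => i ∈ J r)).card : ℝ)
      = ∑ r : α, if i ∈ J r then (1:ℝ) else 0 := by
    intro i
    rw [← Finset.sum_filter, Finset.sum_const, nsmul_eq_mul, mul_one]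
  simp_rw [h1]
  rw [Finset.sum_comm]
  refine Finset.sum_congr rfl fun r _ => ?_
  rw [← Finset.sum_filter, Finset.sum_const, nsmul_eq_mul, mul_one]
  congr 1
  rw [Finset.inter_comm, Finset.filter_mem_eq_inter]

lemma my_fin_sum {k : ℕ} (f : Fin k → ℝ) (N : ℕ) :
    ∑ i ∈ Finset.range N, (if h : i < k then f ⟨i, h⟩ else 0)
      = ∑ i ∈ Finset.univ.filter (fun i : Fin k => (i : ℕ) < N), f i := by
  classical
  set c' : ℕ → ℝ := fun i => if h : i < k then f ⟨i, h⟩ else 0 with hc'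
  set q : ℕ → ℝ := fun i => if i < N then c' i else 0 with hq
  have hA : ∑ i ∈ Finset.range N, c' i = ∑ i ∈ Finset.range (max N k), q i := by
    rw [← Finset.sum_subset (Finset.range_subset_range.mpr (le_max_left N k))
      (fun i _ hi => if_neg (fun h => hi (Finset.mem_range.mpr h)))]
    exact Finset.sum_congr rfl fun i hi => (if_pos (Finset.mem_range.mp hi)).symm
  have hB : ∑ i ∈ Finset.range k, q i = ∑ i ∈ Finset.range (max N k), q i := by
    refine Finset.sum_subset (Finset.range_subset_range.mpr (le_max_right N k)) fun i _ hi => ?_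
    have hik : ¬ i < k := fun h => hi (Finset.mem_range.mpr h)
    simp only [hq, hc', dif_neg hik]
    split <;> rfl
  have hC : ∑ i ∈ Finset.range k, q i
      = ∑ i ∈ Finset.univ.filter (fun i : Fin k => (i : ℕ) < N), f i := by
    rw [← Fin.sum_univ_eq_sum_range q k, ← Finset.sum_filter]
    refine Finset.sum_congr rfl fun i _ => ?_
    simp only [hq, hc', dif_pos i.isLt, Fin.eta]
  rw [show ∑ i ∈ Finset.range N, (if h : i < k then f ⟨i, h⟩ else 0)
    = ∑ i ∈ Finset.range N, c' i from rfl, hA, ← hB, hC]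
lemma my_lpNorm_rpow {ι : Type*} [Fintype ι] (y : ι → ℝ) {p : ℝ} (hp : p ≠ 0) :
    lpNorm p y ^ p = ∑ i, |y i| ^ p := by
  rw [lpNorm, ← Real.rpow_mul
    (Finset.sum_nonneg fun i _ => Real.rpow_nonneg (abs_nonneg _) p),
    one_div_mul_cancel hp, Real.rpow_one]
set_option maxHeartbeats 2000000 in
/-- **Upper bound in the ℓ_p-RIP lemma.** If `G_A` is `t`-left-regular and a
`(γ, μ)`-unique expander with maximum right degree `s_max`, then for any `p ≥ 1`,
`δ₂ ∈ (0,1)` and `γn`-sparse `x`,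
`‖Ax‖_p^p ≤ (t/(1-δ₂)^(p-1) + (μt/δ₂^(p-1))(s_max-1)^(p-1)) ‖x‖_p^p`. -/
theorem rip_upper_bound {m n : ℕ} (t smax : ℕ) (γ μ : ℝ)
    (A : Matrix (Fin m) (Fin n) ℝ)
    (hsign : ∀ r u, A r u = 0 ∨ A r u = 1 ∨ A r u = -1)
    (hreg : LeftRegular (matNbrs A) t)
    (hexp : UniqueExpander (matNbrs A) t γ μ)
    (hsmax : smax = Finset.univ.sup (fun r : Fin m => rightDeg (matNbrs A) r))
    (p δ₂ : ℝ) (hp : 1 ≤ p) (hδ0 : 0 < δ₂) (hδ1 : δ₂ < 1) :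
    ∀ x : Fin n → ℝ, Sparse (γ * n) x →
      lpNorm p (A.mulVec x) ^ p ≤
        ((t : ℝ) / (1 - δ₂) ^ (p - 1) +
          μ * t / δ₂ ^ (p - 1) * ((smax : ℝ) - 1) ^ (p - 1)) * lpNorm p x ^ p := by
  
  classical
  intro x hx
  have hp0 : (0:ℝ) < p := lt_of_lt_of_le one_pos hp
  have hpne : p ≠ 0 := ne_of_gt hp0
  set S : Finset (Fin n) := Finset.univ.filter (fun u => x u ≠ 0) with hSdef
  have hScard : (S.card : ℝ) ≤ γ * n := by
    have hsupp : Function.support x = ↑S := by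
      ext u; simp [Function.mem_support, hSdef]
    rw [Sparse, hsupp, Set.ncard_coe_finset] at hx
    exact hx
  rw [my_lpNorm_rpow _ hpne, my_lpNorm_rpow _ hpne]
  by_cases hS : S = ∅
  · have hx0 : ∀ u, x u = 0 := by
      intro u; by_contra h
      have : u ∈ S := by simp [hSdef, h]
      simp [hS] at this
    have hAx : A.mulVec x = 0 := by
      ext r; simp [Matrix.mulVec, dotProduct, hx0]
    rw [hAx]
    simp [hx0, Real.zero_rpow hpne]
  by_cases ht : t = 0
  · have hA0 : ∀ r u, A r u = 0 := by
      intro r u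
      by_contra h
      have hu := hreg u
      rw [ht, Finset.card_eq_zero] at hu
      have : r ∈ matNbrs A u := by simp [matNbrs, h]
      simp [hu] at this
    have hAx : A.mulVec x = 0 := by
      ext r; simp [Matrix.mulVec, dotProduct, hA0]
    rw [hAx, ht]
    have h1 : ∀ r : Fin m, |(0 : Fin m → ℝ) r| ^ p = 0 := by
      intro r; simp [Real.zero_rpow hpne]
    simp only [h1, Finset.sum_const, Nat.cast_zero, smul_zero]
    rw [show ((0:ℝ) / (1 - δ₂) ^ (p-1) + μ * 0 / δ₂ ^ (p-1) * ((smax:ℝ) - 1) ^ (p-1)) = 0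
      by ring]
    rw [zero_mul]
  -- main case
  have hSne : S.Nonempty := Finset.nonempty_iff_ne_empty.mpr hS
  have htpos : 0 < t := Nat.pos_of_ne_zero ht
  set k := S.card with hk
  have hkpos : 0 < k := Finset.card_pos.mpr hSne
  set g : Fin k → Fin n := fun i => ((S.orderIsoOfFin hk.symm) i : Fin n) with hg
  have hg_inj : Function.Injective g := fun i j h => by
    have := (S.orderIsoOfFin hk.symm).injective (Subtype.ext h); exact this
  have hg_mem : ∀ i, g i ∈ S := fun i => ((S.orderIsoOfFin hk.symm) i).2
  have hg_surj : ∀ u ∈ S, ∃ i, g i = u := fun u hu =>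
    ⟨(S.orderIsoOfFin hk.symm).symm ⟨u, hu⟩, by
      simp only [hg]
      rw [show ((S.orderIsoOfFin hk.symm) ((S.orderIsoOfFin hk.symm).symm ⟨u, hu⟩))
        = ⟨u, hu⟩ from (S.orderIsoOfFin hk.symm).apply_symm_apply _]⟩
  set σ : Equiv.Perm (Fin k) := Tuple.sort (fun i => -|x (g i)|) with hσ
  set v : Fin k → Fin n := fun i => g (σ i) with hv
  have hv_inj : Function.Injective v := hg_inj.comp σ.injective
  have hv_mem : ∀ i, v i ∈ S := fun i => hg_mem _
  have hv_surj : ∀ u ∈ S, ∃ i, v i = u := fun u hu => by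
    obtain ⟨i, hi⟩ := hg_surj u hu
    exact ⟨σ.symm i, by simp [hv, hi]⟩
  have hv_anti : ∀ i j : Fin k, i ≤ j → |x (v j)| ≤ |x (v i)| := by
    intro i j hij
    have h := Tuple.monotone_sort (fun i => -|x (g i)|) hij
    simp only [Function.comp_apply] at h
    have : -|x (g (σ i))| ≤ -|x (g (σ j))| := h
    simp only [hv]
    linarith
  set w : Fin k → ℝ := fun i => |x (v i)| ^ p with hw
  have hw0 : ∀ i, 0 ≤ w i := fun i => Real.rpow_nonneg (abs_nonneg _) _
  have hw_anti : ∀ i j : Fin k, i ≤ j → w j ≤ w i := fun i j hij =>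
    Real.rpow_le_rpow (abs_nonneg _) (hv_anti i j hij) hp0.le
  set I : Fin m → Finset (Fin k) :=
    fun r => Finset.univ.filter (fun i => A r (v i) ≠ 0) with hI
  set J : Fin m → Finset (Fin k) :=
    fun r => (I r).filter (fun i => ∃ i' ∈ I r, i' < i) with hJ
  have hJI : ∀ r, J r ⊆ I r := fun r => Finset.filter_subset _ _
  have hmemI : ∀ r i, i ∈ I r ↔ A r (v i) ≠ 0 := by
    intro r i; simp [hI]
  have ht_card : ∀ i, (Finset.univ.filter (fun r => i ∈ I r)).card = t := by
    intro i
    have : Finset.univ.filter (fun r => i ∈ I r) = matNbrs A (v i) := by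
      ext r; simp [hmemI, matNbrs]
    rw [this]; exact hreg (v i)
  -- μ ≥ 0
  have htR : (0:ℝ) < t := by exact_mod_cast htpos
  have hkR : (1:ℝ) ≤ k := by exact_mod_cast hkpos
  have hμ0 : 0 ≤ μ := by
    obtain ⟨u, hu⟩ := hSne
    have h1 : ((({u} : Finset (Fin n))).card : ℝ) ≤ γ * n := by
      rw [Finset.card_singleton, Nat.cast_one]
      calc (1:ℝ) ≤ k := hkR
        _ ≤ γ * n := hScard
    have h2 := hexp {u} h1
    have h3 : ((uniqueNbrs (matNbrs A) {u}).card : ℝ) ≤ t := by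
      have hsub : uniqueNbrs (matNbrs A) {u} ⊆ nbrs (matNbrs A) {u} :=
        Finset.filter_subset _ _
      have h4 : (nbrs (matNbrs A) {u}).card = t := by
        rw [nbrs, Finset.singleton_biUnion]; exact hreg u
      calc ((uniqueNbrs (matNbrs A) {u}).card : ℝ)
          ≤ ((nbrs (matNbrs A) {u}).card : ℝ) := by
            exact_mod_cast Finset.card_le_card hsub
        _ = t := by rw [h4]
    rw [Finset.card_singleton, Nat.cast_one, mul_one] at h2
    nlinarith
  -- smax ≥ 1
  have hsmax1 : (1:ℝ) ≤ smax := by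
    obtain ⟨u, hu⟩ := hSne
    have hne : (matNbrs A u).Nonempty := Finset.card_pos.mp (by rw [hreg u]; exact htpos)
    obtain ⟨r, hr⟩ := hne
    have hdeg : 1 ≤ rightDeg (matNbrs A) r := by
      rw [rightDeg]
      refine Finset.card_pos.mpr ⟨u, ?_⟩
      simp [hr]
    have hle : rightDeg (matNbrs A) r ≤ smax := by
      rw [hsmax]; exact Finset.le_sup (Finset.mem_univ r)
    exact_mod_cast le_trans hdeg hle
  -- sum of w equals p-mass of x
  have hsum_w : ∑ i, w i = ∑ u, |x u| ^ p := by
    have h1 : ∑ u ∈ S, |x u| ^ p = ∑ u, |x u| ^ p := by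
      refine Finset.sum_subset (Finset.subset_univ S) fun u _ hu => ?_
      have : x u = 0 := by
        by_contra h; exact hu (by simp [hSdef, h])
      simp [this, Real.zero_rpow hpne]
    rw [← h1]
    refine Finset.sum_bij (fun i _ => v i) (fun i _ => hv_mem i)
      (fun i _ j _ h => hv_inj h) (fun u hu => ?_) (fun i _ => rfl)
    obtain ⟨i, hi⟩ := hv_surj u hu
    exact ⟨i, Finset.mem_univ i, hi⟩
  -- per-row bound
  have hrow : ∀ r, |A.mulVec x r| ≤
      (∑ i ∈ I r \ J r, |x (v i)|) + ∑ i ∈ J r, |x (v i)| := by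
    intro r
    rw [Finset.sum_sdiff (hJI r)]
    set T : Finset (Fin n) := S.filter (fun u => A r u ≠ 0) with hT
    have h1 : A.mulVec x r = ∑ u, A r u * x u := rfl
    calc |A.mulVec x r| ≤ ∑ u, |A r u * x u| := by
          rw [h1]; exact Finset.abs_sum_le_sum_abs _ _
      _ = ∑ u ∈ T, |A r u * x u| := by
          refine (Finset.sum_subset (Finset.subset_univ T) fun u _ hu => ?_).symm
          rcases eq_or_ne (A r u) 0 with h | h
          · simp [h]
          · have : x u = 0 := by
              by_contra hx'
              exact hu (by simp [hT, hSdef, h, hx'])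
            simp [this]
      _ ≤ ∑ u ∈ T, |x u| := by
          refine Finset.sum_le_sum fun u _ => ?_
          rw [abs_mul]
          have : |A r u| ≤ 1 := by
            rcases hsign r u with h | h | h <;> simp [h]
          nlinarith [abs_nonneg (x u), abs_nonneg (A r u)]
      _ = ∑ i ∈ I r, |x (v i)| := by
          refine (Finset.sum_bij (fun i _ => v i) ?_ (fun i _ j _ h => hv_inj h)
            ?_ (fun i _ => rfl)).symm
          · intro i hi
            have := (hmemI r i).mp hi
            simp [hT, hSdef]
            constructor
            · have := hv_mem i
              simpa [hSdef] using this
            · exact this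
          · intro u hu
            rw [hT, Finset.mem_filter] at hu
            obtain ⟨i, hi⟩ := hv_surj u hu.1
            exact ⟨i, (hmemI r i).mpr (by rw [hi]; exact hu.2), hi⟩
  -- card of I r \ J r at most one
  have hacard : ∀ r, (I r \ J r).card ≤ 1 := by
    intro r
    by_contra h
    push_neg at h
    obtain ⟨a, ha, b, hb, hab⟩ := Finset.one_lt_card.mp h
    have haI := (Finset.mem_sdiff.mp ha).1
    have hbI := (Finset.mem_sdiff.mp hb).1
    rcases lt_or_gt_of_ne hab with hlt | hlt
    · exact (Finset.mem_sdiff.mp hb).2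
        (by rw [hJ]; exact Finset.mem_filter.mpr ⟨hbI, ⟨a, haI, hlt⟩⟩)
    · exact (Finset.mem_sdiff.mp ha).2
        (by rw [hJ]; exact Finset.mem_filter.mpr ⟨haI, ⟨b, hbI, hlt⟩⟩)
  have ha_le : ∀ r, (∑ i ∈ I r \ J r, |x (v i)|) ^ p ≤ ∑ i ∈ I r \ J r, w i := by
    intro r
    rcases Finset.eq_empty_or_nonempty (I r \ J r) with he | hne
    · rw [he]
      simp [Real.zero_rpow hpne]
    · have h1 : (I r \ J r).card = 1 := le_antisymm (hacard r) hne.card_pos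
      obtain ⟨i₀, hi₀⟩ := Finset.card_eq_one.mp h1
      rw [hi₀, Finset.sum_singleton, Finset.sum_singleton]
  -- J r card bound
  have hJr_card : ∀ r, ((J r).card : ℝ) ≤ (smax : ℝ) - 1 := by
    intro r
    rcases Finset.eq_empty_or_nonempty (I r) with he | hne
    · have hJe : J r = ∅ := Finset.subset_empty.mp (he ▸ hJI r)
      rw [hJe]
      simp only [Finset.card_empty, Nat.cast_zero]
      linarith
    · have hi₀J : (I r).min' hne ∉ J r := by
        intro hmem
        rw [hJ, Finset.mem_filter] at hmem
        obtain ⟨_, i', hi', hlt⟩ := hmem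
        exact absurd (Finset.min'_le _ i' hi') (not_le.mpr hlt)
      have hsub : J r ⊆ (I r).erase ((I r).min' hne) := fun j hj =>
        Finset.mem_erase.mpr ⟨fun e => hi₀J (e ▸ hj), hJI r hj⟩
      have h2 := Finset.card_le_card hsub
      rw [Finset.card_erase_of_mem (Finset.min'_mem _ hne)] at h2
      have hIsmax : (I r).card ≤ smax := by
        have h3 : (I r).card ≤ rightDeg (matNbrs A) r := by
          rw [rightDeg]
          refine Finset.card_le_card_of_injOn v (fun i hi => ?_) hv_inj.injOn
          simp only [Finset.mem_filter, Finset.mem_univ, true_and, matNbrs]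
          simpa using (hmemI r i).mp hi
        have h4 : rightDeg (matNbrs A) r ≤ smax := by
          rw [hsmax]; exact Finset.le_sup (Finset.mem_univ r)
        omega
      have h5 : 1 ≤ (I r).card := hne.card_pos
      have h6 : (J r).card + 1 ≤ smax := by omega
      have h7 : (((J r).card + 1 : ℕ) : ℝ) ≤ (smax : ℝ) := by exact_mod_cast h6
      push_cast at h7
      linarith
  set c : Fin k → ℝ := fun i => ((Finset.univ.filter (fun r => i ∈ J r)).card : ℝ) with hc
  -- prefix counting
  have hpreP : ∀ P : Finset (Fin k),
      (∀ i i' : Fin k, i' ≤ i → i ∈ P → i' ∈ P) →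
      ∑ i ∈ P, c i ≤ μ * t * P.card := by
    intro P hdc
    have h0 : ∑ i ∈ P, c i = ∑ r : Fin m, ((J r ∩ P).card : ℝ) := my_dc2 J P
    set R₁ : Finset (Fin m) := Finset.univ.filter (fun r => (I r ∩ P).Nonempty) with hR₁def
    have hrow2 : ∀ r, ((J r ∩ P).card : ℝ) ≤
        ((I r ∩ P).card : ℝ) - (if (I r ∩ P).Nonempty then (1:ℝ) else 0) := by
      intro r
      rcases Finset.eq_empty_or_nonempty (I r ∩ P) with he | hne
      · have hJP : J r ∩ P = ∅ := Finset.subset_empty.mp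
          (he ▸ Finset.inter_subset_inter (hJI r) Finset.Subset.rfl)
        rw [hJP, he, if_neg (by simp)]
        simp
      · rw [if_pos hne]
        have hqP : (I r ∩ P).min' hne ∈ P :=
          (Finset.mem_inter.mp ((I r ∩ P).min'_mem hne)).2
        have hqJ : (I r ∩ P).min' hne ∉ J r ∩ P := by
          intro hmem
          have hqJ' := (Finset.mem_inter.mp hmem).1
          rw [hJ, Finset.mem_filter] at hqJ'
          obtain ⟨_, i', hi', hlt⟩ := hqJ'
          have hi'P : i' ∈ P := hdc _ i' (le_of_lt hlt) hqP
          exact absurd (Finset.min'_le _ i' (Finset.mem_inter.mpr ⟨hi', hi'P⟩))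
            (not_le.mpr hlt)
        have hsub : J r ∩ P ⊆ (I r ∩ P).erase ((I r ∩ P).min' hne) := fun j hj =>
          Finset.mem_erase.mpr ⟨fun e => hqJ (e ▸ hj),
            Finset.inter_subset_inter (hJI r) Finset.Subset.rfl hj⟩
        have h2 := Finset.card_le_card hsub
        rw [Finset.card_erase_of_mem (Finset.min'_mem _ hne)] at h2
        have h5 : 1 ≤ (I r ∩ P).card := hne.card_pos
        have h6 : (J r ∩ P).card + 1 ≤ (I r ∩ P).card := by omega
        have h7 : (((J r ∩ P).card + 1 : ℕ) : ℝ) ≤ ((I r ∩ P).card : ℝ) := by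
          exact_mod_cast h6
        push_cast at h7
        linarith
    have hIsum : ∑ r : Fin m, ((I r ∩ P).card : ℝ) = (t : ℝ) * P.card := by
      rw [← my_dc2 I P]
      have he : ∀ i ∈ P, ((Finset.univ.filter (fun r => i ∈ I r)).card : ℝ) = (t:ℝ) := by
        intro i _; rw [ht_card i]
      rw [Finset.sum_congr rfl he, Finset.sum_const, nsmul_eq_mul]
      ring
    have hite : ∑ r : Fin m, (if (I r ∩ P).Nonempty then (1:ℝ) else 0) = (R₁.card : ℝ) := by
      rw [hR₁def, ← Finset.sum_filter, Finset.sum_const, nsmul_eq_mul, mul_one]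
    have hR₁ : (t : ℝ) * (1 - μ) * P.card ≤ (R₁.card : ℝ) := by
      have himg : (P.image v).card = P.card := Finset.card_image_of_injective P hv_inj
      have hγ : (((P.image v)).card : ℝ) ≤ γ * n := by
        rw [himg]
        have hPk : P.card ≤ k := by
          calc P.card ≤ (Finset.univ : Finset (Fin k)).card := Finset.card_le_univ P
            _ = k := by simp
        calc (P.card : ℝ) ≤ (k : ℝ) := by exact_mod_cast hPk
          _ ≤ γ * n := hScard
      have h6 := hexp (P.image v) hγ
      rw [himg] at h6
      have hsub2 : uniqueNbrs (matNbrs A) (P.image v) ⊆ R₁ := by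
        intro r hr
        have hr' : r ∈ nbrs (matNbrs A) (P.image v) := Finset.filter_subset _ _ hr
        rw [nbrs, Finset.mem_biUnion] at hr'
        obtain ⟨u, hu, hru⟩ := hr'
        obtain ⟨i, hiP, hiv⟩ := Finset.mem_image.mp hu
        refine Finset.mem_filter.mpr ⟨Finset.mem_univ r, ⟨i, Finset.mem_inter.mpr
          ⟨(hmemI r i).mpr ?_, hiP⟩⟩⟩
        subst hiv
        simpa [matNbrs] using hru
      calc (t : ℝ) * (1 - μ) * P.card ≤ ((uniqueNbrs (matNbrs A) (P.image v)).card : ℝ) := h6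
        _ ≤ (R₁.card : ℝ) := by exact_mod_cast Finset.card_le_card hsub2
    calc ∑ i ∈ P, c i = ∑ r : Fin m, ((J r ∩ P).card : ℝ) := h0
      _ ≤ ∑ r : Fin m, (((I r ∩ P).card : ℝ) - (if (I r ∩ P).Nonempty then (1:ℝ) else 0)) :=
          Finset.sum_le_sum fun r _ => hrow2 r
      _ = (t : ℝ) * P.card - (R₁.card : ℝ) := by
          rw [Finset.sum_sub_distrib, hIsum, hite]
      _ ≤ (t : ℝ) * P.card - (t : ℝ) * (1 - μ) * P.card := by linarith
      _ = μ * t * P.card := by ring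
  -- Abel
  have habel : ∑ i, c i * w i ≤ μ * t * ∑ i, w i := by
    set c' : ℕ → ℝ := fun i => if h : i < k then c ⟨i, h⟩ else 0 with hc'
    set w' : ℕ → ℝ := fun i => if h : i < k then w ⟨i, h⟩ else 0 with hw'
    have hwa' : ∀ i j, i ≤ j → w' j ≤ w' i := by
      intro i j hij
      by_cases hi : i < k
      · by_cases hj2 : j < k
        · simp only [hw', dif_pos hi, dif_pos hj2]
          exact hw_anti ⟨i, hi⟩ ⟨j, hj2⟩ hij
        · simp only [hw', dif_pos hi, dif_neg hj2]
          exact hw0 _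
      · have hj2 : ¬ j < k := by omega
        simp only [hw', dif_neg hi, dif_neg hj2, le_refl]
    have hwz' : ∀ i, k ≤ i → w' i = 0 := fun i h => dif_neg (by omega)
    have hpre' : ∀ j : ℕ, ∑ i ∈ Finset.range (j+1), c' i ≤ (μ * t) * (j+1) := by
      intro j
      have heq : ∑ i ∈ Finset.range (j+1), c' i
          = ∑ i ∈ Finset.univ.filter (fun i : Fin k => (i : ℕ) < j+1), c i := by
        rw [hc']
        exact my_fin_sum c (j+1)
      rw [heq]
      set P := Finset.univ.filter (fun i : Fin k => (i : ℕ) < j+1) with hPdef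
      have hdc : ∀ i i' : Fin k, i' ≤ i → i ∈ P → i' ∈ P := by
        intro i i' hle hiP
        rw [hPdef] at hiP ⊢
        rw [Finset.mem_filter] at hiP ⊢
        exact ⟨Finset.mem_univ _, lt_of_le_of_lt (by exact_mod_cast hle) hiP.2⟩
      have h7 := hpreP P hdc
      have hPcard : (P.card : ℝ) ≤ (j+1 : ℝ) := by
        have : P.card ≤ j + 1 := by
          have h8 : P.card ≤ (Finset.range (j+1)).card :=
            Finset.card_le_card_of_injOn (fun i : Fin k => (i : ℕ))
              (fun i hi => Finset.mem_range.mpr (by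
                rw [hPdef] at hi
                rw [Finset.mem_coe, Finset.mem_filter] at hi
                exact hi.2))
              (Fin.val_injective.injOn)
          simpa using h8
        exact_mod_cast this
      calc ∑ i ∈ P, c i ≤ μ * t * P.card := h7
        _ ≤ (μ * t) * (j+1) := by
            exact mul_le_mul_of_nonneg_left hPcard (mul_nonneg hμ0 (Nat.cast_nonneg t))
    have hres := my_abel k c' w' (μ * t) hwa' hwz' hpre'
    have hL : ∑ i ∈ Finset.range k, c' i * w' i = ∑ i : Fin k, c i * w i := by
      rw [← Fin.sum_univ_eq_sum_range (fun i => c' i * w' i) k]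
      refine Finset.sum_congr rfl fun i _ => ?_
      simp only [hc', hw', dif_pos i.isLt, Fin.eta]
    have hRR : ∑ i ∈ Finset.range k, w' i = ∑ i : Fin k, w i := by
      rw [← Fin.sum_univ_eq_sum_range w' k]
      refine Finset.sum_congr rfl fun i _ => ?_
      simp only [hw', dif_pos i.isLt, Fin.eta]
    rw [hL, hRR] at hres
    exact hres
  -- assemble
  have hpow1 : (0:ℝ) < (1 - δ₂) ^ (p - 1) := Real.rpow_pos_of_pos (by linarith) _
  have hpow2 : (0:ℝ) < δ₂ ^ (p - 1) := Real.rpow_pos_of_pos hδ0 _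
  have hsmne : (0:ℝ) ≤ ((smax : ℝ) - 1) ^ (p - 1) :=
    Real.rpow_nonneg (by linarith) _
  have B1 : ∑ r, (∑ i ∈ I r \ J r, |x (v i)|) ^ p ≤ (t : ℝ) * ∑ i, w i := by
    calc ∑ r, (∑ i ∈ I r \ J r, |x (v i)|) ^ p
        ≤ ∑ r, ∑ i ∈ I r \ J r, w i := Finset.sum_le_sum fun r _ => ha_le r
      _ = ∑ i, ((Finset.univ.filter (fun r => i ∈ I r \ J r)).card : ℝ) * w i :=
          my_dc1 (fun r => I r \ J r) w
      _ ≤ ∑ i, (t : ℝ) * w i := by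
          refine Finset.sum_le_sum fun i _ => mul_le_mul_of_nonneg_right ?_ (hw0 i)
          have hss : Finset.univ.filter (fun r => i ∈ I r \ J r)
              ⊆ Finset.univ.filter (fun r => i ∈ I r) :=
            Finset.monotone_filter_right _ (fun r _ hr => (Finset.mem_sdiff.mp hr).1)
          calc ((Finset.univ.filter (fun r => i ∈ I r \ J r)).card : ℝ)
              ≤ ((Finset.univ.filter (fun r => i ∈ I r)).card : ℝ) := by
                exact_mod_cast Finset.card_le_card hss
            _ = (t : ℝ) := by rw [ht_card i]
      _ = (t : ℝ) * ∑ i, w i := by rw [← Finset.mul_sum]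
  have B2 : ∑ r, (∑ i ∈ J r, |x (v i)|) ^ p
      ≤ ((smax : ℝ) - 1) ^ (p - 1) * (μ * t * ∑ i, w i) := by
    calc ∑ r, (∑ i ∈ J r, |x (v i)|) ^ p
        ≤ ∑ r, (((smax : ℝ) - 1) ^ (p - 1) * ∑ i ∈ J r, w i) := by
          refine Finset.sum_le_sum fun r _ => ?_
          refine (my_pow_mean (J r) _ (fun i _ => abs_nonneg _) hp).trans ?_
          exact mul_le_mul_of_nonneg_right
            (Real.rpow_le_rpow (Nat.cast_nonneg _) (hJr_card r) (by linarith))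
            (Finset.sum_nonneg fun i _ => hw0 i)
      _ = ((smax : ℝ) - 1) ^ (p - 1) * ∑ r, ∑ i ∈ J r, w i := by rw [← Finset.mul_sum]
      _ = ((smax : ℝ) - 1) ^ (p - 1) * ∑ i, c i * w i := by rw [my_dc1 J w]
      _ ≤ ((smax : ℝ) - 1) ^ (p - 1) * (μ * t * ∑ i, w i) :=
          mul_le_mul_of_nonneg_left habel hsmne
  calc ∑ r, |A.mulVec x r| ^ p
      ≤ ∑ r, ((∑ i ∈ I r \ J r, |x (v i)|) + ∑ i ∈ J r, |x (v i)|) ^ p :=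
        Finset.sum_le_sum fun r _ => Real.rpow_le_rpow (abs_nonneg _) (hrow r) hp0.le
    _ ≤ ∑ r, ((∑ i ∈ I r \ J r, |x (v i)|) ^ p / (1 - δ₂) ^ (p - 1)
          + (∑ i ∈ J r, |x (v i)|) ^ p / δ₂ ^ (p - 1)) :=
        Finset.sum_le_sum fun r _ => my_two_split
          (Finset.sum_nonneg fun i _ => abs_nonneg _)
          (Finset.sum_nonneg fun i _ => abs_nonneg _) hδ0 hδ1 hp
    _ = (∑ r, (∑ i ∈ I r \ J r, |x (v i)|) ^ p) / (1 - δ₂) ^ (p - 1)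
          + (∑ r, (∑ i ∈ J r, |x (v i)|) ^ p) / δ₂ ^ (p - 1) := by
        rw [Finset.sum_add_distrib, ← Finset.sum_div, ← Finset.sum_div]
    _ ≤ ((t : ℝ) * ∑ i, w i) / (1 - δ₂) ^ (p - 1)
          + (((smax : ℝ) - 1) ^ (p - 1) * (μ * t * ∑ i, w i)) / δ₂ ^ (p - 1) := by
        exact add_le_add ((div_le_div_iff_of_pos_right hpow1).mpr B1)
          ((div_le_div_iff_of_pos_right hpow2).mpr B2)
    _ = ((t : ℝ) / (1 - δ₂) ^ (p - 1)
          + μ * t / δ₂ ^ (p - 1) * ((smax : ℝ) - 1) ^ (p - 1)) * ∑ u, |x u| ^ p := by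
        rw [hsum_w]
        ring
end

section
/- Let G = (V_L, V_R, E) be a bipartite t-left-regular (γ,μ)-unique expander with |V_L| = n. Let k, b be positive integers with kb ≤ γn, and let S₁, …, S_b ⊆ V_L be pairwise disjoint sets, each of size k. Then there exist sets T₁, …, T_b ⊆ V_R, each of size at least (1−μb)tk, such that for each 1 ≤ i ≤ b, every r ∈ T_i has exactly one neighbor in S_i and no neighbors in any S_j with j ≠ i. -/
open Finset

/-- **Disjoint unique-neighbor sets.** If `G` is a `t`-left-regular `(γ, μ)`-unique
expander, `kb ≤ γn`, and `S₁, …, S_b ⊆ V_L` are disjoint sets of size `k` each, then there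
are sets `T₁, …, T_b ⊆ V_R`, each of size at least `(1-μb)tk`, such that every `r ∈ T_i`
has exactly one neighbor in `S_i` and no neighbor in any `S_j`, `j ≠ i`. -/
theorem disjoint_unique_neighbors {n m : ℕ} (t : ℕ) (γ μ : ℝ)
    (N : Fin n → Finset (Fin m))
    (hreg : LeftRegular N t) (hexp : UniqueExpander N t γ μ)
    (k b : ℕ) (hk : 0 < k) (hb : 0 < b) (hkb : ((k * b : ℕ) : ℝ) ≤ γ * n)
    (S : Fin b → Finset (Fin n))
    (hdisj : ∀ i j, i ≠ j → Disjoint (S i) (S j))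
    (hcard : ∀ i, (S i).card = k) :
    ∃ T : Fin b → Finset (Fin m),
      (∀ i, (1 - μ * b) * ((t : ℝ) * k) ≤ ((T i).card : ℝ)) ∧
      (∀ i, ∀ r ∈ T i,
        ((S i).filter (fun v => r ∈ N v)).card = 1 ∧
        ∀ j, j ≠ i → ∀ v ∈ S j, r ∉ N v) := by
  classical
  set Sall : Finset (Fin n) := Finset.univ.biUnion S with hSall
  have hcardAll : Sall.card = k * b := by
    rw [hSall, Finset.card_biUnion (fun i _ j _ hij => hdisj i j hij)]
    simp [hcard, mul_comm]
  have hU := hexp Sall (by rw [hcardAll]; exact_mod_cast hkb)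
  rw [hcardAll] at hU
  set U := uniqueNbrs N Sall with hUdef
  refine ⟨fun i => U.filter (fun r => ∃ v ∈ S i, r ∈ N v), ?_, ?_⟩
  · intro i
    set Ti := U.filter (fun r => ∃ v ∈ S i, r ∈ N v) with hTi
    have hsub : U \ Ti ⊆ (Finset.univ.erase i).biUnion (fun j => nbrs N (S j)) := by
      intro r hr
      simp only [Finset.mem_sdiff] at hr
      obtain ⟨hrU, hrT⟩ := hr
      have h1 : (Sall.filter (fun v => r ∈ N v)).card = 1 := by
        have h := hrU
        simp only [hUdef, uniqueNbrs, Finset.mem_filter] at h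
        exact h.2
      obtain ⟨v, hv⟩ := Finset.card_eq_one.mp h1
      have hvmem : v ∈ Sall ∧ r ∈ N v := by
        have : v ∈ Sall.filter (fun v => r ∈ N v) := hv ▸ Finset.mem_singleton_self v
        simpa using this
      obtain ⟨j, hj⟩ : ∃ j, v ∈ S j := by
        have := hvmem.1; simp only [hSall, Finset.mem_biUnion] at this
        obtain ⟨j, _, hjv⟩ := this; exact ⟨j, hjv⟩
      have hji : j ≠ i := by
        rintro rfl
        exact hrT (Finset.mem_filter.mpr ⟨hrU, ⟨v, hj, hvmem.2⟩⟩)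
      exact Finset.mem_biUnion.mpr ⟨j, Finset.mem_erase.mpr ⟨hji, Finset.mem_univ j⟩,
        Finset.mem_biUnion.mpr ⟨v, hj, hvmem.2⟩⟩
    have hcardsub : (U \ Ti).card ≤ (b - 1) * (t * k) := by
      calc (U \ Ti).card ≤ _ := Finset.card_le_card hsub
        _ ≤ ∑ j ∈ Finset.univ.erase i, (nbrs N (S j)).card := Finset.card_biUnion_le
        _ ≤ ∑ j ∈ Finset.univ.erase i, t * k := by
            apply Finset.sum_le_sum
            intro j _
            calc (nbrs N (S j)).card ≤ ∑ v ∈ S j, (N v).card := Finset.card_biUnion_le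
              _ = t * k := by rw [Finset.sum_congr rfl (fun v _ => hreg v), Finset.sum_const, hcard, smul_eq_mul, mul_comm]
        _ = (b - 1) * (t * k) := by
            rw [Finset.sum_const, smul_eq_mul]
            congr 1
            simp [Finset.card_erase_of_mem]
    have hTsub : Ti ⊆ U := Finset.filter_subset _ _
    have hUcard : U.card ≤ Ti.card + (b - 1) * (t * k) := by
      have := Finset.card_sdiff_add_card_eq_card hTsub
      omega
    have hb1 : (1 : ℕ) ≤ b := hb
    have hcast : (((b - 1) * (t * k) : ℕ) : ℝ) = ((b : ℝ) - 1) * (t * k) := by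
      push_cast [hb1]; ring
    have hUc : (U.card : ℝ) ≤ (Ti.card : ℝ) + ((b : ℝ) - 1) * (t * k) := by
      rw [← hcast]; exact_mod_cast hUcard
    push_cast at hU
    nlinarith [hU, hUc]
  · intro i r hr
    simp only [Finset.mem_filter] at hr
    obtain ⟨hrU, v, hvSi, hvN⟩ := hr
    have h1 : (Sall.filter (fun v => r ∈ N v)).card = 1 := by
      have h := hrU
      simp only [hUdef, uniqueNbrs, Finset.mem_filter] at h
      exact h.2
    obtain ⟨w, hw⟩ := Finset.card_eq_one.mp h1
    have hvw : v = w := by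
      have : v ∈ Sall.filter (fun v => r ∈ N v) := by
        refine Finset.mem_filter.mpr ⟨?_, hvN⟩
        exact Finset.mem_biUnion.mpr ⟨i, Finset.mem_univ i, hvSi⟩
      rw [hw] at this; exact Finset.mem_singleton.mp this
    constructor
    · have hsub : (S i).filter (fun v => r ∈ N v) ⊆ {w} := by
        rw [← hw]
        exact Finset.filter_subset_filter _ (fun x hx =>
          Finset.mem_biUnion.mpr ⟨i, Finset.mem_univ i, hx⟩)
      have hne : v ∈ (S i).filter (fun v => r ∈ N v) := Finset.mem_filter.mpr ⟨hvSi, hvN⟩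
      have hle : ((S i).filter (fun v => r ∈ N v)).card ≤ 1 := by
        simpa using Finset.card_le_card hsub
      have hge : 1 ≤ ((S i).filter (fun v => r ∈ N v)).card :=
        Finset.card_pos.mpr ⟨v, hne⟩
      omega
    · intro j hji u huSj huN
      have : u ∈ Sall.filter (fun v => r ∈ N v) := by
        refine Finset.mem_filter.mpr ⟨?_, huN⟩
        exact Finset.mem_biUnion.mpr ⟨j, Finset.mem_univ j, huSj⟩
      rw [hw] at this
      have huw : u = w := Finset.mem_singleton.mp this
      exact Finset.disjoint_left.mp (hdisj i j (Ne.symm hji)) (hvw ▸ hvSi) (huw ▸ huSj)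
end

section
/- Let G = (V_L, V_R, E) be a bipartite t-left-regular (γ,μ)-unique expander with n := |V_L| ≥ |V_R|. Then there exists a bipartite t-left-regular (γ,μ)-unique expander G' = (V_L', V_R', E') with V_L' = V_L and |V_R'| ≤ 3|V_R|, such that every vertex of V_R' has degree at most tn/|V_R|. -/
open Finset

/-- **Bounding right degrees of an expander.** Given a `t`-left-regular `(γ, μ)`-unique
expander `G` with `n = |V_L| ≥ |V_R| = m`, there is a `t`-left-regular `(γ, μ)`-unique
expander `G'` with the same left vertex set, at most `3m` right vertices, and all right
degrees at most `tn/m`. -/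
theorem bound_right_degrees {n m : ℕ} (t : ℕ) (γ μ : ℝ) (N : Fin n → Finset (Fin m))
    (hnm : m ≤ n) (hreg : LeftRegular N t) (hexp : UniqueExpander N t γ μ) :
    ∃ m' : ℕ, m' ≤ 3 * m ∧ ∃ N' : Fin n → Finset (Fin m'),
      LeftRegular N' t ∧ UniqueExpander N' t γ μ ∧
      ∀ r : Fin m', (rightDeg N' r : ℝ) ≤ (t : ℝ) * n / m := by
  
  classical
  by_cases htriv : t = 0 ∨ n = 0
  · refine ⟨m, by omega, N, hreg, hexp, ?_⟩
    intro r
    have hdeg : rightDeg N r = 0 := by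
      rcases htriv with h | h
      · have hN : ∀ u, N u = ∅ := fun u => Finset.card_eq_zero.mp (by rw [hreg u, h])
        simp [rightDeg, hN]
      · subst h
        simp [rightDeg]
    rw [hdeg]
    push_cast
    positivity
  · push_neg at htriv
    obtain ⟨ht0, hn0⟩ := htriv
    have ht : 0 < t := Nat.pos_of_ne_zero ht0
    have hn : 0 < n := Nat.pos_of_ne_zero hn0
    have hm : 0 < m := by
      by_contra h
      have hm0 : m = 0 := by omega
      subst hm0
      have := hreg ⟨0, hn⟩
      have h2 : (N ⟨0, hn⟩).card ≤ 0 := by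
        have := Finset.card_le_univ (N ⟨0, hn⟩)
        simpa using this
      omega
    set D : ℕ := t * n / m with hD
    have htn : m ≤ t * n := le_trans hnm (Nat.le_mul_of_pos_left n ht)
    have hDpos : 0 < D := Nat.div_pos htn hm
    -- sets and rank
    set A : Fin m → Finset (Fin n) := fun r => Finset.univ.filter (fun u => r ∈ N u) with hA
    set rank : Fin m → Fin n → ℕ :=
      fun r u => ((A r).filter (fun v => v < u)).card with hrank
    have hmemA : ∀ r u, r ∈ N u → u ∈ A r := by
      intro r u h; simp [hA, h]
    have hrank_lt : ∀ r u, r ∈ N u → rank r u < (A r).card := by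
      intro r u h
      apply Finset.card_lt_card
      rw [Finset.ssubset_iff_of_subset (Finset.filter_subset _ _)]
      exact ⟨u, hmemA r u h, by simp⟩
    have key : ∀ r (a b : Fin n), r ∈ N a → a < b → rank r a < rank r b := by
      intro r a b ha hab
      apply Finset.card_lt_card
      rw [Finset.ssubset_iff_of_subset
        (Finset.monotone_filter_right _ (fun v _ hv => lt_trans hv hab))]
      exact ⟨a, Finset.mem_filter.mpr ⟨hmemA r a ha, hab⟩, by simp⟩
    have hrank_inj : ∀ r u v, r ∈ N u → r ∈ N v → rank r u = rank r v → u = v := by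
      intro r u v hu hv heq
      rcases lt_trichotomy u v with h | h | h
      · exact absurd heq (Nat.ne_of_lt (key r u v hu h))
      · exact h
      · exact absurd heq.symm (Nat.ne_of_lt (key r v u hv h))
    -- pieces
    set p : Fin m → ℕ := fun r => ((A r).card + D - 1) / D with hp
    have hlt_mul : ∀ a : ℕ, a < (a / D + 1) * D := by
      intro a
      have h2 := Nat.div_add_mod a D
      have h1 : a % D < D := Nat.mod_lt _ hDpos
      calc a = D * (a / D) + a % D := h2.symm
        _ < D * (a / D) + D := by omega
        _ = (a / D + 1) * D := by ring
    have hpiece_lt : ∀ r u, r ∈ N u → rank r u / D < p r := by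
      intro r u hu
      have h1 : rank r u < (A r).card := hrank_lt r u hu
      have h2 : (A r).card ≤ p r * D := by
        rcases Nat.eq_zero_or_pos (A r).card with h0 | h0
        · omega
        · have hpr : p r = ((A r).card - 1) / D + 1 := by
            show ((A r).card + D - 1) / D = _
            rw [show (A r).card + D - 1 = ((A r).card - 1) + D by omega,
              Nat.add_div_right _ hDpos]
          rw [hpr]
          have := hlt_mul ((A r).card - 1)
          omega
      rw [Nat.div_lt_iff_lt_mul hDpos]
      omega
    -- sum bound
    have hsum : ∑ r : Fin m, (A r).card = t * n := by
      have h1 : ∀ r : Fin m, (A r).card = ∑ u : Fin n, if r ∈ N u then 1 else 0 :=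
        fun r => Finset.card_filter _ _
      rw [Finset.sum_congr rfl fun r _ => h1 r, Finset.sum_comm]
      have h2 : ∀ u : Fin n, (∑ r : Fin m, if r ∈ N u then (1 : ℕ) else 0) = t := by
        intro u
        rw [Finset.sum_ite_mem, Finset.univ_inter, Finset.sum_const, smul_eq_mul,
          mul_one, hreg u]
      rw [Finset.sum_congr rfl fun u _ => h2 u, Finset.sum_const, Finset.card_univ]
      simp [mul_comm]
    have hsum_div : ∀ f : Fin m → ℕ, ∑ r, f r / D ≤ (∑ r, f r) / D := by
      intro f
      rw [Nat.le_div_iff_mul_le hDpos, Finset.sum_mul]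
      exact Finset.sum_le_sum fun r _ => Nat.div_mul_le_self _ _
    have hcard_pieces : ∑ r, p r ≤ 2 * m := by
      have h1 : ∑ r, p r ≤ (∑ r, ((A r).card + D - 1)) / D := hsum_div _
      have h2 : ∑ r, ((A r).card + D - 1) = t * n + m * (D - 1) := by
        rw [show (fun r => (A r).card + D - 1) = fun r => (A r).card + (D - 1) from
          funext fun r => by omega]
        rw [Finset.sum_add_distrib, hsum, Finset.sum_const, Finset.card_univ]
        simp [Fintype.card_fin, Nat.smul_one_eq_cast]
      have h3 : t * n + m * (D - 1) ≤ 2 * m * D := by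
        have h5 := Nat.div_add_mod (t * n) m
        rw [← hD] at h5
        have h6 : t * n % m < m := Nat.mod_lt _ hm
        have h1D : 1 ≤ D := hDpos
        zify [h1D] at h5 h6 ⊢
        linarith
      calc ∑ r, p r ≤ (∑ r, ((A r).card + D - 1)) / D := h1
        _ ≤ (2 * m * D) / D := by rw [h2]; exact Nat.div_le_div_right h3
        _ = 2 * m := Nat.mul_div_cancel _ hDpos
    -- the used pieces
    set Rused : Finset (Fin m × ℕ) :=
      Finset.univ.biUnion (fun r => (Finset.range (p r)).image fun j => (r, j)) with hRused
    have hRmem : ∀ r j, (r, j) ∈ Rused ↔ j < p r := by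
      intro r j
      simp only [hRused, Finset.mem_biUnion, Finset.mem_image, Finset.mem_range,
        Finset.mem_univ, true_and, Prod.mk.injEq]
      constructor
      · rintro ⟨r', j', hj', rfl, rfl⟩; exact hj'
      · intro hj; exact ⟨r, j, hj, rfl, rfl⟩
    have hRcard : Rused.card ≤ 2 * m := by
      calc Rused.card ≤ ∑ r, ((Finset.range (p r)).image fun j => (r, j)).card :=
            Finset.card_biUnion_le
        _ = ∑ r, p r := by
            refine Finset.sum_congr rfl fun r _ => ?_
            rw [Finset.card_image_of_injective _
              (fun a b h => by simpa using congrArg Prod.snd h), Finset.card_range]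
        _ ≤ 2 * m := hcard_pieces
    have h2m : 0 < 2 * m := by omega
    -- the packing map
    set E : Fin m × ℕ → Fin (2 * m) := fun x =>
      if hx : x ∈ Rused then (Fin.castLE hRcard) (Rused.equivFin ⟨x, hx⟩)
      else ⟨0, h2m⟩ with hE
    have hE_inj : ∀ x ∈ Rused, ∀ y ∈ Rused, E x = E y → x = y := by
      intro x hx y hy h
      simp only [hE, dif_pos hx, dif_pos hy] at h
      have h2 := Fin.castLE_injective hRcard h
      have h3 := Rused.equivFin.injective h2
      exact Subtype.mk_eq_mk.mp h3
    set N' : Fin n → Finset (Fin (2 * m)) :=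
      fun u => (N u).image (fun r => E (r, rank r u / D)) with hN'
    have hmemR : ∀ u r, r ∈ N u → (r, rank r u / D) ∈ Rused :=
      fun u r h => (hRmem _ _).mpr (hpiece_lt r u h)
    -- left regularity
    have hreg' : LeftRegular N' t := by
      intro u
      rw [hN']
      rw [Finset.card_image_of_injOn, hreg u]
      intro r hr r' hr' h
      have h2 := hE_inj _ (hmemR u r hr) _ (hmemR u r' hr') h
      exact (Prod.ext_iff.mp h2).1
    -- unique expansion
    have hexp' : UniqueExpander N' t γ μ := by
      intro S hS
      refine le_trans (hexp S hS) (Nat.cast_le.mpr ?_)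
      set f : Fin m → Fin (2 * m) := fun r =>
        if h : (S.filter fun w => r ∈ N w).Nonempty then
          E (r, rank r ((S.filter fun w => r ∈ N w).min' h) / D)
        else ⟨0, h2m⟩ with hf
      apply Finset.card_le_card_of_injOn f
      · intro r hr
        obtain ⟨hrn, hcard1⟩ := Finset.mem_filter.mp hr
        have hne : (S.filter fun w => r ∈ N w).Nonempty :=
          Finset.card_pos.mp (by rw [hcard1]; norm_num)
        set v := (S.filter fun w => r ∈ N w).min' hne with hv
        have hvmem := Finset.min'_mem _ hne
        obtain ⟨hvS, hrNv⟩ := Finset.mem_filter.mp hvmem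
        have huniq : ∀ w ∈ S.filter fun w => r ∈ N w, w = v :=
          fun w hw => Finset.card_le_one.mp (le_of_eq hcard1) w hw v hvmem
        have hfr : f r = E (r, rank r v / D) := by rw [hf]; exact dif_pos hne
        rw [hfr]
        refine Finset.mem_filter.mpr ⟨?_, ?_⟩
        · exact Finset.mem_biUnion.mpr ⟨v, hvS,
            Finset.mem_image.mpr ⟨r, hrNv, rfl⟩⟩
        · have hfilter : (S.filter fun w => E (r, rank r v / D) ∈ N' w) = {v} := by
            apply Finset.eq_singleton_iff_unique_mem.mpr
            constructor
            · exact Finset.mem_filter.mpr ⟨hvS,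
                Finset.mem_image.mpr ⟨r, hrNv, rfl⟩⟩
            · intro w hw
              obtain ⟨hwS, hwmem⟩ := Finset.mem_filter.mp hw
              obtain ⟨r₂, hr₂, hEr₂⟩ := Finset.mem_image.mp hwmem
              have h2 := hE_inj _ (hmemR w r₂ hr₂) _ (hmemR v r hrNv) hEr₂
              have hr2 : r₂ = r := (Prod.ext_iff.mp h2).1
              subst hr2
              exact huniq w (Finset.mem_filter.mpr ⟨hwS, hr₂⟩)
          rw [hfilter, Finset.card_singleton]
      · intro r hr r' hr' hff
        obtain ⟨hrn, hcard1⟩ := Finset.mem_filter.mp hr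
        obtain ⟨hrn', hcard1'⟩ := Finset.mem_filter.mp hr'
        have hne : (S.filter fun w => r ∈ N w).Nonempty :=
          Finset.card_pos.mp (by rw [hcard1]; norm_num)
        have hne' : (S.filter fun w => r' ∈ N w).Nonempty :=
          Finset.card_pos.mp (by rw [hcard1']; norm_num)
        have hv := Finset.min'_mem _ hne
        have hv' := Finset.min'_mem _ hne'
        rw [hf] at hff
        simp only [dif_pos hne, dif_pos hne'] at hff
        have h2 := hE_inj _
          (hmemR _ r (Finset.mem_filter.mp hv).2) _
          (hmemR _ r' (Finset.mem_filter.mp hv').2) hff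
        exact (Prod.ext_iff.mp h2).1
    -- right degrees
    refine ⟨2 * m, by omega, N', hreg', hexp', ?_⟩
    intro r'
    have hDle : ((D : ℕ) : ℝ) ≤ (t : ℝ) * n / m := by
      have h1 : ((D : ℕ) : ℝ) ≤ ((t * n : ℕ) : ℝ) / (m : ℝ) := by
        rw [hD]; exact Nat.cast_div_le
      calc ((D : ℕ) : ℝ) ≤ ((t * n : ℕ) : ℝ) / (m : ℝ) := h1
        _ = (t : ℝ) * n / m := by push_cast; ring
    have hdegD : rightDeg N' r' ≤ D := by
      unfold rightDeg
      by_cases hT : (Finset.univ.filter fun u => r' ∈ N' u).Nonempty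
      · obtain ⟨u₀, hu₀⟩ := hT
        have hu₀' : r' ∈ N' u₀ := (Finset.mem_filter.mp hu₀).2
        obtain ⟨r₀, hr₀, hEr₀⟩ := Finset.mem_image.mp hu₀'
        have hkey : ∀ u, r' ∈ N' u → r₀ ∈ N u ∧ rank r₀ u / D = rank r₀ u₀ / D := by
          intro u hu
          obtain ⟨r, hr, hEr⟩ := Finset.mem_image.mp hu
          have h2 := hE_inj _ (hmemR u r hr) _ (hmemR u₀ r₀ hr₀) (by rw [hEr, hEr₀])
          obtain ⟨h3, h4⟩ := Prod.ext_iff.mp h2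
          subst h3
          exact ⟨hr, h4⟩
        calc (Finset.univ.filter fun u => r' ∈ N' u).card
            ≤ (Finset.range D).card := by
              apply Finset.card_le_card_of_injOn (fun u => rank r₀ u % D)
              · intro u _
                exact Finset.mem_range.mpr (Nat.mod_lt _ hDpos)
              · intro u hu u' hu' hmod
                obtain ⟨hNu, hdiv⟩ := hkey u (Finset.mem_filter.mp hu).2
                obtain ⟨hNu', hdiv'⟩ := hkey u' (Finset.mem_filter.mp hu').2
                apply hrank_inj r₀ u u' hNu hNu'
                have e1 := Nat.div_add_mod (rank r₀ u) D
                have e2 := Nat.div_add_mod (rank r₀ u') D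
                have e3 : rank r₀ u / D = rank r₀ u' / D := by rw [hdiv, hdiv']
                rw [e3] at e1
                have hmod2 : rank r₀ u % D = rank r₀ u' % D := hmod
                generalize hK : D * (rank r₀ u' / D) = K at e1 e2
                omega
          _ = D := Finset.card_range D
      · rw [Finset.not_nonempty_iff_eq_empty.mp hT, Finset.card_empty]
        omega
    calc (rightDeg N' r' : ℝ) ≤ (D : ℝ) := Nat.cast_le.mpr hdegD
      _ ≤ (t : ℝ) * n / m := hDle
end

section
/- Let p ≥ 1, let k be a positive integer with 2k ≤ n, let ε ∈ [0,1], and suppose the subspace X ⊆ ℝ^n is (2k, ε)-ℓ_p-spread. Let S ⊆ [n] with |S| = k, and let X_{S̄} ⊆ ℝ^{[n]\S} be the image of X under the coordinate projection onto the coordinates not in S. Then X_{S̄} is (k, ε)-ℓ_p-spread (as a subspace of ℝ^{[n]\S}). -/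
open Finset

/-- **Coordinate projections of spread subspaces are spread.** If `X ⊆ ℝ^n` is
`(2k, ε)`-`ℓ_p`-spread and `|S| = k`, then the image of `X` under the projection onto the
coordinates not in `S` is `(k, ε)`-`ℓ_p`-spread. -/
theorem projection_spread {n : ℕ} (p : ℝ) (hp : 1 ≤ p) (k : ℕ) (hk : 0 < k)
    (hkn : 2 * k ≤ n) (ε : ℝ) (hε : ε ∈ Set.Icc (0 : ℝ) 1)
    (X : Submodule ℝ (Fin n → ℝ)) (hX : SpreadSubspace p (2 * (k : ℝ)) ε X)
    (S : Finset (Fin n)) (hS : S.card = k) :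
    SpreadSubspace p k ε
      (X.map (LinearMap.funLeft ℝ ℝ (fun i : {i : Fin n // i ∉ S} => (i : Fin n)))) := by
  have hp0 : (0:ℝ) < p := lt_of_lt_of_le one_pos hp
  intro z hz hz0
  rintro ⟨y, hy, hyle⟩
  obtain ⟨x, hxX, hxz⟩ := hz
  have hx0 : x ≠ 0 := by
    rintro rfl
    exact hz0 (by rw [← hxz]; exact map_zero _)
  have hzx : ∀ i : {i : Fin n // i ∉ S}, z i = x i := by
    intro i; rw [← hxz]; rfl
  apply hX x hxX hx0
  set y' : Fin n → ℝ := fun i => if h : i ∈ S then x i else y ⟨i, h⟩ with hy'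
  refine ⟨y', ?_, ?_⟩
  · -- sparsity
    have hsub : Function.support y' ⊆ (S : Set (Fin n)) ∪ Subtype.val '' Function.support y := by
      intro i hi
      by_cases h : i ∈ S
      · exact Or.inl h
      · refine Or.inr ⟨⟨i, h⟩, ?_, rfl⟩
        simpa [hy', h] using hi
    have h1 : (Function.support y').ncard ≤
        ((S : Set (Fin n)) ∪ Subtype.val '' Function.support y).ncard :=
      Set.ncard_le_ncard hsub (Set.toFinite _)
    have h2 : ((S : Set (Fin n)) ∪ Subtype.val '' Function.support y).ncard ≤
        (S : Set (Fin n)).ncard + (Subtype.val '' Function.support y).ncard :=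
      Set.ncard_union_le _ _
    have h3 : (Subtype.val '' Function.support y).ncard = (Function.support y).ncard :=
      Set.ncard_image_of_injective _ Subtype.val_injective
    have h4 : (S : Set (Fin n)).ncard = k := by rw [Set.ncard_coe_finset, hS]
    have h5 : ((Function.support y).ncard : ℝ) ≤ k := hy
    have : ((Function.support y').ncard : ℝ) ≤ k + k := by
      calc ((Function.support y').ncard : ℝ)
          ≤ ((S : Set (Fin n)).ncard + (Subtype.val '' Function.support y).ncard : ℕ) := by
            exact_mod_cast le_trans h1 h2
        _ = k + ((Function.support y).ncard : ℝ) := by push_cast [h3, h4]; ring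
        _ ≤ k + k := by linarith
    unfold Sparse
    linarith [this]
  · -- norm bound
    have hsum : ∑ i, |(x - y') i| ^ p = ∑ i : {i : Fin n // i ∉ S}, |(z - y) i| ^ p := by
      calc ∑ i, |(x - y') i| ^ p = ∑ i ∈ Sᶜ, |(x - y') i| ^ p := by
            refine (Finset.sum_subset (Finset.subset_univ Sᶜ) ?_).symm
            intro i _ hi
            have h : i ∈ S := by simpa using hi
            simp [hy', dif_pos h, Real.zero_rpow (ne_of_gt hp0)]
        _ = ∑ i : {i : Fin n // i ∉ S}, |(x - y') (i : Fin n)| ^ p :=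
            Finset.sum_subtype Sᶜ (fun i => Finset.mem_compl) (fun i => |(x - y') i| ^ p)
        _ = ∑ i : {i : Fin n // i ∉ S}, |(z - y) i| ^ p := by
            apply Finset.sum_congr rfl
            intro i _
            simp only [Pi.sub_apply, hy', dif_neg i.2, hzx i]
    have hzlex : lpNorm p z ≤ lpNorm p x := by
      unfold lpNorm
      apply Real.rpow_le_rpow
      · positivity
      · calc ∑ i : {i : Fin n // i ∉ S}, |z i| ^ p
            = ∑ i : {i : Fin n // i ∉ S}, |x (i : Fin n)| ^ p := by
              apply Finset.sum_congr rfl; intro i _; rw [hzx i]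
          _ = ∑ i ∈ Sᶜ, |x i| ^ p :=
              (Finset.sum_subtype Sᶜ (fun i => Finset.mem_compl) (fun i => |x i| ^ p)).symm
          _ ≤ ∑ i, |x i| ^ p := Finset.sum_le_sum_of_subset_of_nonneg
              (Finset.subset_univ Sᶜ) (fun i _ _ => by positivity)
      · positivity
    calc lpNorm p (x - y') = lpNorm p (z - y) := by unfold lpNorm; rw [hsum]
      _ ≤ ε * lpNorm p z := hyle
      _ ≤ ε * lpNorm p x := mul_le_mul_of_nonneg_left hzlex hε.1
end

section
/- Let p ≥ 1, let k ≤ n be positive integers, let ε ∈ [0,1), and let A ∈ ℝ^{m×n} satisfy (1−ε)‖x‖_p ≤ ‖Ax‖_p ≤ (1+ε)‖x‖_p for every k-sparse x ∈ ℝ^n. Then for every x ∈ ℝ^n, ‖Ax‖_p ≤ (1+ε)·⌈n/k⌉^{1−1/p}·‖x‖_p. -/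
open Finset

lemma lpNorm_nonneg' {ι : Type*} [Fintype ι] (p : ℝ) (x : ι → ℝ) : 0 ≤ lpNorm p x :=
  Real.rpow_nonneg (Finset.sum_nonneg fun i _ => Real.rpow_nonneg (abs_nonneg _) _) _

lemma lpNorm_zero' {ι : Type*} [Fintype ι] {p : ℝ} (hp : p ≠ 0) : lpNorm p (0 : ι → ℝ) = 0 := by
  simp [lpNorm, Real.zero_rpow hp, Real.zero_rpow (one_div_ne_zero hp), Real.zero_rpow (inv_ne_zero hp), one_div]

lemma lpNorm_sum_le' {ι α : Type*} [Fintype ι] {p : ℝ} (hp : 1 ≤ p) (s : Finset α)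
    (f : α → ι → ℝ) : lpNorm p (∑ a ∈ s, f a) ≤ ∑ a ∈ s, lpNorm p (f a) := by
  induction s using Finset.cons_induction with
  | empty => simp [lpNorm_zero' (by linarith : p ≠ 0)]
  | cons a s ha ih =>
    rw [Finset.sum_cons, Finset.sum_cons]
    calc lpNorm p (f a + ∑ b ∈ s, f b)
        ≤ lpNorm p (f a) + lpNorm p (∑ b ∈ s, f b) := by
          have := Real.Lp_add_le Finset.univ (f a) (∑ b ∈ s, f b) hp
          simpa [lpNorm] using this
      _ ≤ _ := by linarith

/-- **Operator norm bound from RIP.** If `(1-ε)‖x‖_p ≤ ‖Ax‖_p ≤ (1+ε)‖x‖_p` for every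
`k`-sparse `x`, then `‖Ax‖_p ≤ (1+ε)⌈n/k⌉^(1-1/p)‖x‖_p` for every `x ∈ ℝ^n`. -/
theorem rip_op_norm_bound {m n : ℕ} (p : ℝ) (hp : 1 ≤ p) (k : ℕ) (hk : 0 < k)
    (hkn : k ≤ n) (ε : ℝ) (hε0 : 0 ≤ ε) (hε1 : ε < 1)
    (A : Matrix (Fin m) (Fin n) ℝ)
    (hA : ∀ x : Fin n → ℝ, Sparse k x →
      (1 - ε) * lpNorm p x ≤ lpNorm p (A.mulVec x) ∧
      lpNorm p (A.mulVec x) ≤ (1 + ε) * lpNorm p x) :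
    ∀ x : Fin n → ℝ,
      lpNorm p (A.mulVec x) ≤ (1 + ε) * (⌈(n : ℝ) / k⌉₊ : ℝ) ^ (1 - 1 / p) * lpNorm p x := by
  intro x
  have hp0 : p ≠ 0 := by linarith
  set T := ⌈(n : ℝ) / k⌉₊ with hTdef
  have hkR : (0:ℝ) < k := by exact_mod_cast hk
  have hnT : n ≤ T * k := by
    have h1 : (n : ℝ) / k ≤ T := Nat.le_ceil _
    have : (n : ℝ) ≤ T * k := by rwa [div_le_iff₀ hkR] at h1
    exact_mod_cast this
  have hmem : ∀ i : Fin n, (i : ℕ) / k < T := by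
    intro i
    rw [Nat.div_lt_iff_lt_mul hk]
    exact lt_of_lt_of_le i.2 hnT
  set xb : Fin T → Fin n → ℝ := fun j i => if (i : ℕ) / k = (j : ℕ) then x i else 0 with hxb
  have hsum : ∑ j, xb j = x := by
    funext i
    rw [Finset.sum_apply]
    rw [Finset.sum_eq_single (⟨(i:ℕ)/k, hmem i⟩ : Fin T)]
    · simp [hxb]
    · intro j _ hj
      simp only [hxb]
      rw [if_neg]
      intro h
      exact hj (Fin.ext h.symm)
    · intro h; exact absurd (Finset.mem_univ _) h
  have hsp : ∀ j : Fin T, Sparse k (xb j) := by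
    intro j
    set S : Finset (Fin n) := Finset.univ.filter (fun i : Fin n => (i:ℕ)/k = (j:ℕ)) with hS
    have hsub : Function.support (xb j) ⊆ ↑S := by
      intro i hi
      simp only [Function.mem_support, hxb] at hi
      simp only [hS, Finset.coe_filter, Set.mem_setOf_eq, Finset.mem_univ, true_and]
      by_contra h
      exact hi (if_neg h)
    have hcard : S.card ≤ k := by
      have : S.card ≤ (Finset.range k).card := by
        apply Finset.card_le_card_of_injOn (fun i : Fin n => (i:ℕ) % k)
        · intro i _
          exact Finset.mem_range.2 (Nat.mod_lt _ hk)
        · intro i hi i' hi' hmod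
          simp only [Finset.mem_coe, hS, Finset.mem_filter] at hi hi'
          simp only [] at hmod
          apply Fin.ext
          have e1 := Nat.div_add_mod (i:ℕ) k
          have e2 := Nat.div_add_mod (i':ℕ) k
          rw [hi.2] at e1
          rw [hi'.2] at e2
          omega
      simpa using this
    unfold Sparse
    calc ((Function.support (xb j)).ncard : ℝ)
        ≤ ((↑S : Set (Fin n)).ncard : ℝ) := by
          exact_mod_cast Set.ncard_le_ncard hsub (Set.toFinite _)
      _ = (S.card : ℝ) := by rw [Set.ncard_coe_finset]
      _ ≤ (k : ℝ) := by exact_mod_cast hcard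
  have hpow : ∀ y : Fin n → ℝ, (lpNorm p y) ^ p = ∑ i, |y i| ^ p := by
    intro y
    rw [lpNorm, ← Real.rpow_mul
      (Finset.sum_nonneg fun i _ => Real.rpow_nonneg (abs_nonneg _) _),
      one_div_mul_cancel hp0, Real.rpow_one]
  have hsplit : ∑ j, (lpNorm p (xb j)) ^ p = (lpNorm p x) ^ p := by
    rw [hpow x]
    simp_rw [hpow]
    rw [Finset.sum_comm]
    apply Finset.sum_congr rfl
    intro i _
    rw [Finset.sum_eq_single (⟨(i:ℕ)/k, hmem i⟩ : Fin T)]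
    · simp [hxb]
    · intro j _ hj
      simp only [hxb]
      rw [if_neg, abs_zero, Real.zero_rpow hp0]
      intro h
      exact hj (Fin.ext h.symm)
    · intro h; exact absurd (Finset.mem_univ _) h
  have hholder : ∑ j, lpNorm p (xb j) ≤ (T:ℝ) ^ (1 - 1/p) * lpNorm p x := by
    have h := Real.inner_le_weight_mul_Lp_of_nonneg Finset.univ hp (fun _ => (1:ℝ))
      (fun j => lpNorm p (xb j)) (fun _ => zero_le_one) (fun j => lpNorm_nonneg' p _)
    simp only [one_mul, Finset.sum_const, Finset.card_univ, Fintype.card_fin,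
      nsmul_eq_mul, mul_one] at h
    rw [hsplit, Real.rpow_rpow_inv (lpNorm_nonneg' p x) hp0, ← one_div] at h
    exact h
  have hAsum : A.mulVec x = ∑ j, A.mulVec (xb j) := by
    rw [← hsum]
    rw [show (∑ j, xb j) = ∑ j ∈ Finset.univ, xb j from rfl]
    rw [← Matrix.mulVecLin_apply, map_sum]
    simp [Matrix.mulVecLin_apply]
  calc lpNorm p (A.mulVec x) = lpNorm p (∑ j, A.mulVec (xb j)) := by rw [hAsum]
    _ ≤ ∑ j, lpNorm p (A.mulVec (xb j)) := lpNorm_sum_le' hp _ _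
    _ ≤ ∑ j, (1+ε) * lpNorm p (xb j) := Finset.sum_le_sum fun j _ => (hA _ (hsp j)).2
    _ = (1+ε) * ∑ j, lpNorm p (xb j) := by rw [Finset.mul_sum]
    _ ≤ (1+ε) * ((T:ℝ)^(1-1/p) * lpNorm p x) :=
        mul_le_mul_of_nonneg_left hholder (by linarith)
    _ = _ := by ring
end
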